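/- arXiv:2306.11324 — 5 statements merged into one kernel-verified Lean document; each statement's English description precedes it below -/
import Mathlib

section
/- Let κ > 0 and let K ⊂ ℝ³ be compact. Then the fundamental solution admits the far-field expansion: sup_{y ∈ K} | 4π‖x‖₂ · e^{−iκ‖x‖₂} · G(x,y) − e^{−iκ⟨x/‖x‖₂, y⟩} | → 0 as ‖x‖₂ → ∞; moreover there exist constants C > 0 and R > 0 such that this supremum is bounded by C/‖x‖₂ for all ‖x‖₂ ≥ R. -/
open scoped RealInnerProductSpace

/-- The fundamental solution `G(x,y) = e^{iκ‖x−y‖}/(4π‖x−y‖)` of the Helmholtz equation. -/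
noncomputable def helmholtzG (κ : ℝ) (x y : EuclideanSpace ℝ (Fin 3)) : ℂ :=
  Complex.exp (Complex.I * (κ : ℂ) * (‖x - y‖ : ℂ)) / (4 * (Real.pi : ℂ) * (‖x - y‖ : ℂ))

lemma norm_exp_I_mul_sub_one_le (θ : ℝ) :
    ‖Complex.exp (Complex.I * (θ : ℂ)) - 1‖ ≤ |θ| := by
  have h1 : Complex.exp (Complex.I * (θ : ℂ)) = Complex.exp ((θ : ℂ) * Complex.I) := by
    ring_nf
  have hre : (Complex.exp ((θ:ℂ) * Complex.I)).re = Real.cos θ :=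
    Complex.exp_ofReal_mul_I_re θ
  have him : (Complex.exp ((θ:ℂ) * Complex.I)).im = Real.sin θ :=
    Complex.exp_ofReal_mul_I_im θ
  have hsq : ‖Complex.exp ((θ:ℂ) * Complex.I) - 1‖ ^ 2 = 2 - 2 * Real.cos θ := by
    rw [Complex.sq_norm, Complex.normSq_apply, Complex.sub_re,
      Complex.sub_im, hre, him]
    simp only [Complex.one_re, Complex.one_im]
    have := Real.sin_sq_add_cos_sq θ
    ring_nf
    nlinarith [Real.sin_sq_add_cos_sq θ]
  have hcos : 2 - 2 * Real.cos θ ≤ θ ^ 2 := by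
    have h2 : Real.cos θ = Real.cos (2 * (θ/2)) := by ring_nf
    have h3 : Real.cos (2 * (θ/2)) = Real.cos (θ/2)^2 - Real.sin (θ/2)^2 :=
      Real.cos_two_mul' _
    have h4 := Real.sin_sq_add_cos_sq (θ/2)
    have h5 := Real.sin_sq_le_sq (x := θ/2)
    nlinarith
  have hnn : (0:ℝ) ≤ ‖Complex.exp ((θ:ℂ) * Complex.I) - 1‖ := norm_nonneg _
  rw [h1]
  nlinarith [abs_nonneg θ, sq_abs θ]

lemma farField_key (κ M : ℝ) (hκ : 0 < κ) (hM : 0 ≤ M)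
    (x y : EuclideanSpace ℝ (Fin 3)) (hy : ‖y‖ ≤ M) (hx : 2 * M + 1 ≤ ‖x‖) :
    ‖4 * (Real.pi : ℂ) * (‖x‖ : ℂ) * Complex.exp (-(Complex.I * (κ : ℂ) * (‖x‖ : ℂ)))
        * helmholtzG κ x y
      - Complex.exp (-(Complex.I * (κ : ℂ) * ((⟪‖x‖⁻¹ • x, y⟫ : ℝ) : ℂ)))‖
      ≤ (2 * M + 2 * κ * M ^ 2) / ‖x‖ := by
  set r : ℝ := ‖x - y‖ with hrdef
  have hxpos : (0:ℝ) < ‖x‖ := by linarith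
  have hr1 : ‖x‖ - M ≤ r := by
    have := norm_sub_norm_le x y
    simp only [hrdef]; linarith
  have hrpos : (0:ℝ) < r := by linarith
  have hrx : ‖x‖ ≤ 2 * r := by linarith
  set s : ℝ := ⟪‖x‖⁻¹ • x, y⟫ with hsdef
  have hs_eq : ‖x‖ * s = ⟪x, y⟫ := by
    rw [hsdef, real_inner_smul_left]
    field_simp
  have hs_abs : |s| ≤ M := by
    have h1 : |s| ≤ ‖(‖x‖⁻¹ • x : EuclideanSpace ℝ (Fin 3))‖ * ‖y‖ :=
      abs_real_inner_le_norm _ _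
    have h2 : ‖(‖x‖⁻¹ • x : EuclideanSpace ℝ (Fin 3))‖ = 1 := by
      rw [norm_smul, norm_inv, norm_norm]
      field_simp
    rw [h2, one_mul] at h1
    linarith
  set δ : ℝ := r - ‖x‖ + s with hδdef
  have hsq : r ^ 2 = ‖x‖ ^ 2 - 2 * ⟪x, y⟫ + ‖y‖ ^ 2 := norm_sub_sq_real x y
  have hprod : δ * (r + (‖x‖ - s)) = ‖y‖ ^ 2 - s ^ 2 := by
    rw [hδdef]
    linear_combination hsq + 2 * hs_eq
  obtain ⟨hs1, hs2⟩ := abs_le.mp hs_abs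
  have hnum_le : ‖y‖ ^ 2 - s ^ 2 ≤ M ^ 2 := by nlinarith [sq_nonneg s, norm_nonneg y]
  have hnum_nonneg : (0:ℝ) ≤ ‖y‖ ^ 2 - s ^ 2 := by
    have h1 : |s| ≤ ‖(‖x‖⁻¹ • x : EuclideanSpace ℝ (Fin 3))‖ * ‖y‖ :=
      abs_real_inner_le_norm _ _
    have h2 : ‖(‖x‖⁻¹ • x : EuclideanSpace ℝ (Fin 3))‖ = 1 := by
      rw [norm_smul, norm_inv, norm_norm]; field_simp
    rw [h2, one_mul] at h1
    nlinarith [abs_nonneg s, sq_abs s]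
  have hden_pos : (0:ℝ) < r + (‖x‖ - s) := by linarith
  have hδ_nonneg : 0 ≤ δ := by
    by_contra h
    push_neg at h
    nlinarith
  have hxs : (0:ℝ) ≤ ‖x‖ - s := by linarith
  have hδ_le : δ ≤ 2 * M ^ 2 / ‖x‖ := by
    rw [le_div_iff₀ hxpos]
    nlinarith [mul_nonneg hδ_nonneg (by linarith : (0:ℝ) ≤ 2 * r - ‖x‖),
      mul_nonneg hδ_nonneg hxs]
  -- complex part
  have hrC : (r : ℂ) ≠ 0 := by exact_mod_cast hrpos.ne'
  have hπC : (Real.pi : ℂ) ≠ 0 := by exact_mod_cast Real.pi_ne_zero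
  set u : ℂ := Complex.exp (Complex.I * (κ : ℂ) * ((r : ℂ) - (‖x‖ : ℂ))) with hudef
  set v : ℂ := Complex.exp (-(Complex.I * (κ : ℂ) * (s : ℂ))) with hvdef
  have heq : 4 * (Real.pi : ℂ) * (‖x‖ : ℂ) * Complex.exp (-(Complex.I * (κ : ℂ) * (‖x‖ : ℂ)))
      * helmholtzG κ x y = ((‖x‖ / r : ℝ) : ℂ) * u := by
    rw [helmholtzG, hudef, ← hrdef]
    have hc : Complex.I * (κ:ℂ) * ((r:ℂ) - (‖x‖:ℂ))
        = Complex.I * (κ:ℂ) * (r:ℂ) - Complex.I * (κ:ℂ) * (‖x‖:ℂ) := by ring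
    rw [hc, Complex.exp_sub, Complex.exp_neg]
    push_cast
    field_simp
  have hu_eq : u = v * Complex.exp (Complex.I * ((κ * δ : ℝ) : ℂ)) := by
    rw [hudef, hvdef, ← Complex.exp_add]
    congr 1
    push_cast [hδdef]
    ring
  have hu_norm : ‖u‖ = 1 := by
    rw [hudef, Complex.norm_exp]
    norm_num [Complex.mul_re, Complex.mul_im]
  have hv_norm : ‖v‖ = 1 := by
    rw [hvdef, Complex.norm_exp]
    norm_num [Complex.mul_re, Complex.mul_im]
  have habs : |‖x‖ - r| ≤ M := by
    have h := abs_norm_sub_norm_le x (x - y)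
    rw [sub_sub_cancel] at h
    rw [← hrdef] at h
    linarith
  have hfrac : |‖x‖ / r - 1| ≤ 2 * M / ‖x‖ := by
    have h1 : |‖x‖ / r - 1| = |‖x‖ - r| / r := by
      rw [div_sub_one hrpos.ne', abs_div, abs_of_pos hrpos]
    rw [h1]
    rw [div_le_div_iff₀ hrpos hxpos]
    have h2 : |‖x‖ - r| * ‖x‖ ≤ M * ‖x‖ := mul_le_mul_of_nonneg_right habs hxpos.le
    have h3 : M * ‖x‖ ≤ M * (2 * r) := mul_le_mul_of_nonneg_left hrx hM
    linarith
  have hsplit : ((‖x‖ / r : ℝ) : ℂ) * u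
      - Complex.exp (-(Complex.I * (κ : ℂ) * ((s : ℝ) : ℂ)))
      = (((‖x‖ / r : ℝ) : ℂ) - 1) * u + (u - v) := by
    rw [hvdef]; ring
  have huv : ‖u - v‖ ≤ κ * (2 * M ^ 2 / ‖x‖) := by
    rw [hu_eq]
    have : v * Complex.exp (Complex.I * ((κ * δ : ℝ) : ℂ)) - v
        = v * (Complex.exp (Complex.I * ((κ * δ : ℝ) : ℂ)) - 1) := by ring
    rw [this, norm_mul, hv_norm, one_mul]
    calc ‖Complex.exp (Complex.I * ((κ * δ : ℝ) : ℂ)) - 1‖ ≤ |κ * δ| :=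
          norm_exp_I_mul_sub_one_le _
      _ = κ * δ := by rw [abs_of_nonneg (mul_nonneg hκ.le hδ_nonneg)]
      _ ≤ κ * (2 * M ^ 2 / ‖x‖) := by
          exact mul_le_mul_of_nonneg_left hδ_le hκ.le
  rw [heq, hsplit]
  calc ‖(((‖x‖ / r : ℝ) : ℂ) - 1) * u + (u - v)‖
      ≤ ‖(((‖x‖ / r : ℝ) : ℂ) - 1) * u‖ + ‖u - v‖ := norm_add_le _ _
    _ = |‖x‖ / r - 1| + ‖u - v‖ := by
        rw [norm_mul, hu_norm, mul_one]
        norm_cast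
    _ ≤ 2 * M / ‖x‖ + κ * (2 * M ^ 2 / ‖x‖) := add_le_add hfrac huv
    _ = (2 * M + 2 * κ * M ^ 2) / ‖x‖ := by field_simp

/-- Far-field expansion of the fundamental solution, uniformly for `y` in a compact set `K`:
`sup_{y ∈ K} |4π‖x‖ e^{−iκ‖x‖} G(x,y) − e^{−iκ⟨x/‖x‖, y⟩}| → 0` as `‖x‖ → ∞`, and moreover
there are `C > 0`, `R > 0` such that this supremum is bounded by `C/‖x‖` whenever `‖x‖ ≥ R`. -/
theorem fundamentalSolution_farField (κ : ℝ) (hκ : 0 < κ)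
    (K : Set (EuclideanSpace ℝ (Fin 3))) (hK : IsCompact K) :
    (∀ ε > 0, ∃ R : ℝ, ∀ x : EuclideanSpace ℝ (Fin 3), R ≤ ‖x‖ → ∀ y ∈ K,
      ‖4 * (Real.pi : ℂ) * (‖x‖ : ℂ) * Complex.exp (-(Complex.I * (κ : ℂ) * (‖x‖ : ℂ)))
          * helmholtzG κ x y
        - Complex.exp (-(Complex.I * (κ : ℂ) * ((⟪‖x‖⁻¹ • x, y⟫ : ℝ) : ℂ)))‖ < ε) ∧
    ∃ C > (0 : ℝ), ∃ R > (0 : ℝ), ∀ x : EuclideanSpace ℝ (Fin 3), R ≤ ‖x‖ → ∀ y ∈ K,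
      ‖4 * (Real.pi : ℂ) * (‖x‖ : ℂ) * Complex.exp (-(Complex.I * (κ : ℂ) * (‖x‖ : ℂ)))
          * helmholtzG κ x y
        - Complex.exp (-(Complex.I * (κ : ℂ) * ((⟪‖x‖⁻¹ • x, y⟫ : ℝ) : ℂ)))‖ ≤ C / ‖x‖ := by
  obtain ⟨M0, hM0⟩ := hK.isBounded.exists_norm_le
  set M : ℝ := max M0 0 with hMdef
  have hM : (0:ℝ) ≤ M := le_max_right _ _
  have hMK : ∀ y ∈ K, ‖y‖ ≤ M := fun y hy => le_trans (hM0 y hy) (le_max_left _ _)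
  set C : ℝ := 2 * M + 2 * κ * M ^ 2 with hCdef
  have hC0 : (0:ℝ) ≤ C := by nlinarith [mul_nonneg hκ.le (sq_nonneg M)]
  have key : ∀ x : EuclideanSpace ℝ (Fin 3), 2 * M + 1 ≤ ‖x‖ → ∀ y ∈ K,
      ‖4 * (Real.pi : ℂ) * (‖x‖ : ℂ) * Complex.exp (-(Complex.I * (κ : ℂ) * (‖x‖ : ℂ)))
          * helmholtzG κ x y
        - Complex.exp (-(Complex.I * (κ : ℂ) * ((⟪‖x‖⁻¹ • x, y⟫ : ℝ) : ℂ)))‖ ≤ C / ‖x‖ :=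
    fun x hx y hy => farField_key κ M hκ hM x y (hMK y hy) hx
  constructor
  · intro ε hε
    refine ⟨max (2 * M + 1) (C / ε + 1), fun x hx y hy => ?_⟩
    have hx1 : 2 * M + 1 ≤ ‖x‖ := le_trans (le_max_left _ _) hx
    have hx2 : C / ε + 1 ≤ ‖x‖ := le_trans (le_max_right _ _) hx
    have hxpos : (0:ℝ) < ‖x‖ := by linarith
    calc ‖4 * (Real.pi : ℂ) * (‖x‖ : ℂ) * Complex.exp (-(Complex.I * (κ : ℂ) * (‖x‖ : ℂ)))
          * helmholtzG κ x y
        - Complex.exp (-(Complex.I * (κ : ℂ) * ((⟪‖x‖⁻¹ • x, y⟫ : ℝ) : ℂ)))‖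
        ≤ C / ‖x‖ := key x hx1 y hy
      _ < ε := by
          rw [div_lt_iff₀ hxpos]
          have h1 : ε * (C / ε + 1) ≤ ε * ‖x‖ := mul_le_mul_of_nonneg_left hx2 hε.le
          have h2 : ε * (C / ε + 1) = C + ε := by field_simp
          nlinarith
  · refine ⟨C + 1, by linarith, 2 * M + 1, by linarith, fun x hx y hy => ?_⟩
    have hxpos : (0:ℝ) < ‖x‖ := by linarith
    calc ‖4 * (Real.pi : ℂ) * (‖x‖ : ℂ) * Complex.exp (-(Complex.I * (κ : ℂ) * (‖x‖ : ℂ)))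
          * helmholtzG κ x y
        - Complex.exp (-(Complex.I * (κ : ℂ) * ((⟪‖x‖⁻¹ • x, y⟫ : ℝ) : ℂ)))‖
        ≤ C / ‖x‖ := key x hx y hy
      _ ≤ (C + 1) / ‖x‖ := by gcongr; linarith
end

section
/- Let κ > 0 and let μ be a finite complex measure on ℝ³ with compact support. Then the single layer potential u(x) = ∫ G(x,y) dμ(y) satisfies the Sommerfeld radiation condition: with r = ‖x‖₂, r·( ⟨x/‖x‖₂, ∇u(x)⟩ − iκ u(x) ) → 0 as ‖x‖₂ → ∞. -/
open MeasureTheory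

namespace SommerfeldAux

abbrev H3 := EuclideanSpace ℝ (Fin 3)

/-- The continuous linear map `w ↦ (⟪v, w⟫ : ℂ)`. -/
noncomputable def hPhi (v : H3) : H3 →L[ℝ] ℂ := Complex.ofRealCLM.comp (innerSL ℝ v)

/-- The scalar factor in the gradient of the Helmholtz kernel. -/
noncomputable def hC (κ : ℝ) (x y : H3) : ℂ :=
  ((‖x - y‖⁻¹ : ℝ) : ℂ) * (Complex.I * κ - (‖x - y‖ : ℂ)⁻¹) * helmholtzG κ x y

lemma norm_hPhi_le (v : H3) : ‖hPhi v‖ ≤ ‖v‖ := by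
  apply ContinuousLinearMap.opNorm_le_bound _ (norm_nonneg v)
  intro w
  simp only [hPhi, ContinuousLinearMap.comp_apply, Complex.ofRealCLM_apply, innerSL_apply_apply,
    Complex.norm_real, Real.norm_eq_abs]
  exact abs_real_inner_le_norm v w

lemma continuous_hPhi : Continuous fun v : H3 => hPhi v := by
  have : (fun v : H3 => hPhi v) =
      fun v => (ContinuousLinearMap.compL ℝ H3 ℝ ℂ Complex.ofRealCLM) ((innerSL ℝ) v) := rfl
  rw [this]
  exact (ContinuousLinearMap.compL ℝ H3 ℝ ℂ Complex.ofRealCLM).continuous.comp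
    (innerSL ℝ).continuous

lemma aux_hasFDerivAt_norm {E : Type*} [NormedAddCommGroup E] [InnerProductSpace ℝ E]
    {v : E} (h : v ≠ 0) :
    HasFDerivAt (fun x : E => ‖x‖) (‖v‖⁻¹ • innerSL ℝ v) v := by
  have h1 : HasFDerivAt (fun x : E => ‖x‖ ^ 2) (2 • innerSL ℝ v) v :=
    (hasStrictFDerivAt_norm_sq v).hasFDerivAt
  have hv : (0:ℝ) < ‖v‖ := norm_pos_iff.mpr h
  have h2 : HasDerivAt Real.sqrt (1 / (2 * Real.sqrt (‖v‖ ^ 2))) (‖v‖ ^ 2) :=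
    Real.hasDerivAt_sqrt (by positivity)
  have h3 := h2.comp_hasFDerivAt v h1
  have h4 : (Real.sqrt ∘ fun x : E => ‖x‖ ^ 2) = fun x : E => ‖x‖ := by
    ext x; simp [Real.sqrt_sq (norm_nonneg x)]
  rw [h4] at h3
  refine h3.congr_fderiv ?_
  rw [Real.sqrt_sq (norm_nonneg v)]
  ext w
  simp [smul_smul]
  ring

lemma norm_helmholtzG (κ : ℝ) (x y : H3) :
    ‖helmholtzG κ x y‖ = (4 * Real.pi * ‖x - y‖)⁻¹ := by
  rw [helmholtzG, norm_div]
  have h1 : ‖Complex.exp (Complex.I * (κ : ℂ) * (‖x - y‖ : ℂ))‖ = 1 := by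
    rw [Complex.norm_exp]
    have : (Complex.I * (κ : ℂ) * (‖x - y‖ : ℂ)).re = 0 := by simp [Complex.mul_re]
    rw [this, Real.exp_zero]
  rw [h1]
  have h2 : (4 * (Real.pi : ℂ) * (‖x - y‖ : ℂ)) = ((4 * Real.pi * ‖x - y‖ : ℝ) : ℂ) := by
    push_cast; ring
  rw [h2, Complex.norm_real, Real.norm_eq_abs, abs_of_nonneg (by positivity), one_div]

lemma hasFDerivAt_helmholtzG (κ : ℝ) (y : H3) {x : H3} (h : x ≠ y) :
    HasFDerivAt (fun x => helmholtzG κ x y) (hC κ x y • hPhi (x - y)) x := by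
  have hvne : x - y ≠ 0 := sub_ne_zero.mpr h
  have hr : (0:ℝ) < ‖x - y‖ := norm_pos_iff.mpr hvne
  have hrC : ((‖x - y‖ : ℝ) : ℂ) ≠ 0 := by exact_mod_cast hr.ne'
  have hπ : (Real.pi : ℂ) ≠ 0 := by exact_mod_cast Real.pi_ne_zero
  have hsub : HasFDerivAt (fun x : H3 => x - y) (ContinuousLinearMap.id ℝ H3) x :=
    (hasFDerivAt_id x).sub_const y
  have hn : HasFDerivAt (fun x : H3 => ‖x - y‖) (‖x - y‖⁻¹ • innerSL ℝ (x - y)) x := by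
    have := (aux_hasFDerivAt_norm hvne).comp x hsub
    exact this
  set r := ‖x - y‖ with hrdef
  have hre : HasDerivAt (fun s : ℝ => ((s : ℂ))) 1 r := by
    simpa using (hasDerivAt_id r).ofReal_comp
  have hnum : HasDerivAt (fun s : ℝ => Complex.exp (Complex.I * κ * (s : ℂ)))
      (Complex.I * κ * Complex.exp (Complex.I * κ * (r : ℂ))) r := by
    have := ((hre.const_mul (Complex.I * (κ:ℂ)))).cexp
    simpa [mul_comm] using this
  have hden : HasDerivAt (fun s : ℝ => (4 * (Real.pi : ℂ) * (s : ℂ))) (4 * Real.pi) r := by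
    simpa using hre.const_mul (4 * (Real.pi : ℂ))
  have hdenne : (4 * (Real.pi : ℂ) * (r : ℂ)) ≠ 0 := by simp [hπ, hrC]
  have hφ : HasDerivAt
      (fun s : ℝ => Complex.exp (Complex.I * κ * (s : ℂ)) / (4 * (Real.pi:ℂ) * (s:ℂ)))
      ((Complex.I * κ * Complex.exp (Complex.I * κ * (r:ℂ)) * (4 * Real.pi * (r:ℂ)) -
        Complex.exp (Complex.I * κ * (r:ℂ)) * (4 * Real.pi)) / (4 * Real.pi * (r:ℂ))^2) r :=
    hnum.div hden hdenne
  have hcomp := hφ.hasFDerivAt.comp x hn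
  have heq : (fun x : H3 => helmholtzG κ x y) =
      (fun s : ℝ => Complex.exp (Complex.I * κ * (s : ℂ)) / (4 * (Real.pi:ℂ) * (s:ℂ))) ∘
        (fun x : H3 => ‖x - y‖) := rfl
  rw [heq]
  refine hcomp.congr_fderiv ?_
  ext w
  simp only [hC, hPhi, helmholtzG, ContinuousLinearMap.smul_apply,
    ContinuousLinearMap.comp_apply, ContinuousLinearMap.smulRight_apply,
    ContinuousLinearMap.one_apply, Complex.ofRealCLM_apply, smul_eq_mul,
    ContinuousLinearMap.coe_smul', Pi.smul_apply, innerSL_apply_apply,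
    ContinuousLinearMap.toSpanSingleton_apply, Complex.real_smul]
  push_cast
  simp only [← hrdef]
  field_simp

lemma real_est {κ R r t nx : ℝ} (hκ : 0 ≤ κ) (hr1 : 1 ≤ r)
    (hnx : 0 < nx) (hr2 : nx ≤ 2 * r) (hta : |t| ≤ r) (htr : |t - r| * r ≤ R ^ 2) :
    nx * ((4 * Real.pi * r)⁻¹ * (κ * |(t - r) / r| + |t / r ^ 2|)) ≤
      (κ * R ^ 2 + 1) / (Real.pi * nx) := by
  have hπ := Real.pi_pos
  have hr0 : (0:ℝ) < r := lt_of_lt_of_le one_pos hr1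
  set a1 := |t - r| with ha1
  set a2 := |t| with ha2
  have ha1n : 0 ≤ a1 := abs_nonneg _
  have ha2n : 0 ≤ a2 := abs_nonneg _
  have hrw : |(t - r) / r| = a1 / r := by rw [abs_div, abs_of_pos hr0]
  have habs : |r ^ 2| = r ^ 2 := abs_of_pos (pow_pos hr0 2)
  have hrw2 : |t / r ^ 2| = a2 / r ^ 2 := by rw [abs_div, habs]
  rw [hrw, hrw2]
  have h5 : nx * nx ≤ 4 * (r * r) := by nlinarith
  have key : nx * nx * (κ * a1 * r + a2) ≤ 4 * (r * r * r) * (κ * R ^ 2 + 1) := by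
    have p1 : nx * nx * (κ * (a1 * r)) ≤ (4 * (r * r)) * (κ * R ^ 2) := by
      apply mul_le_mul h5 (mul_le_mul_of_nonneg_left htr hκ) (by positivity) (by positivity)
    have p2 : nx * nx * a2 ≤ (4 * (r * r)) * r := by
      apply mul_le_mul h5 hta ha2n (by positivity)
    have h6 : 4 * (r * r) * (κ * R ^ 2) ≤ 4 * (r * r * r) * (κ * R ^ 2) := by
      nlinarith [mul_nonneg (mul_nonneg (sub_nonneg.mpr hr1) (mul_nonneg hr0.le hr0.le))
        (mul_nonneg hκ (sq_nonneg R))]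
    nlinarith [p1, p2, h6]
  have hlhs : (4 * Real.pi * r)⁻¹ * (κ * (a1 / r) + a2 / r ^ 2) =
      (κ * a1 * r + a2) / (4 * Real.pi * r ^ 3) := by
    field_simp
  rw [hlhs, mul_div_assoc' nx _ _, div_le_div_iff₀ (by positivity) (by positivity)]
  nlinarith [mul_le_mul_of_nonneg_left key hπ.le]

lemma measurable_helmholtzG (κ : ℝ) (x' : H3) :
    Measurable (fun y : H3 => helmholtzG κ x' y) := by
  have hc : Continuous fun y : H3 => ((‖x' - y‖ : ℝ) : ℂ) :=
    Complex.continuous_ofReal.comp (continuous_const.sub continuous_id).norm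
  exact ((Complex.continuous_exp.comp (continuous_const.mul hc)).measurable).div
    ((continuous_const.mul hc).measurable)

lemma measurable_hC (κ : ℝ) (x' : H3) :
    Measurable (fun y : H3 => hC κ x' y) := by
  have hcn : Continuous fun y : H3 => ‖x' - y‖ := (continuous_const.sub continuous_id).norm
  have hc : Continuous fun y : H3 => ((‖x' - y‖ : ℝ) : ℂ) :=
    Complex.continuous_ofReal.comp hcn
  have m1 : Measurable fun y : H3 => ((‖x' - y‖⁻¹ : ℝ) : ℂ) :=
    Complex.measurable_ofReal.comp hcn.measurable.inv
  have m2 : Measurable fun y : H3 => (Complex.I * κ - ((‖x' - y‖ : ℝ) : ℂ)⁻¹) :=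
    measurable_const.sub hc.measurable.inv
  exact (m1.mul m2).mul (measurable_helmholtzG κ x')

end SommerfeldAux

open SommerfeldAux

set_option maxHeartbeats 1000000 in
/-- Let `κ > 0` and let a finite complex measure with compact support be given, encoded as a
finite positive measure `μ` with an integrable complex density `ρ`, supported in a compact set
`K` (`μ(Kᶜ) = 0`).  Then the single layer potential `u(x) = ∫ G(x,y) ρ(y) dμ(y)` satisfies the
Sommerfeld radiation condition: with `r = ‖x‖`,
`r·(∂u/∂r − iκu) = ‖x‖·(fderiv ℝ u x (x/‖x‖) − iκ u(x)) → 0` as `‖x‖ → ∞`. -/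
theorem singleLayerPotential_sommerfeld (κ : ℝ) (hκ : 0 < κ)
    (μ : Measure (EuclideanSpace ℝ (Fin 3))) [IsFiniteMeasure μ]
    (ρ : EuclideanSpace ℝ (Fin 3) → ℂ) (hρ : Integrable ρ μ)
    (K : Set (EuclideanSpace ℝ (Fin 3))) (hK : IsCompact K) (hsupp : μ Kᶜ = 0)
    (u : EuclideanSpace ℝ (Fin 3) → ℂ)
    (hu : ∀ x, u x = ∫ y, helmholtzG κ x y * ρ y ∂μ) :
    Filter.Tendsto
      (fun x : EuclideanSpace ℝ (Fin 3) =>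
        (‖x‖ : ℂ) * (fderiv ℝ u x (‖x‖⁻¹ • x) - Complex.I * (κ : ℂ) * u x))
      (Filter.comap (fun x : EuclideanSpace ℝ (Fin 3) => ‖x‖) Filter.atTop) (nhds 0) := by
  obtain ⟨R₀, hR₀⟩ := hK.isBounded.subset_closedBall (0 : H3)
  set R : ℝ := max R₀ 0 with hRdef
  have hRK : K ⊆ Metric.closedBall 0 R :=
    hR₀.trans (Metric.closedBall_subset_closedBall (le_max_left _ _))
  have hR0 : (0:ℝ) ≤ R := le_max_right _ _
  have hKae : ∀ᵐ y ∂μ, y ∈ K := by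
    rw [MeasureTheory.ae_iff]
    exact hsupp
  have hπ := Real.pi_pos
  set C : ℝ := (κ * R ^ 2 + 1) / Real.pi * ∫ y, ‖ρ y‖ ∂μ with hCdef
  have key : ∀ x : H3, 2 * R + 2 ≤ ‖x‖ →
      ‖(‖x‖ : ℂ) * (fderiv ℝ u x (‖x‖⁻¹ • x) - Complex.I * (κ : ℂ) * u x)‖ ≤ C / ‖x‖ := by
    intro x hx
    have hx0 : (0:ℝ) < ‖x‖ := lt_of_lt_of_le (by linarith) hx
    have hxne : x ≠ 0 := by
      intro h; rw [h, norm_zero] at hx0; exact lt_irrefl _ hx0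
    set xh : H3 := ‖x‖⁻¹ • x with hxhdef
    have hxhnorm : ‖xh‖ = 1 := by
      rw [hxhdef, norm_smul, Real.norm_eq_abs, abs_of_pos (by positivity)]
      field_simp
    have hyR : ∀ y ∈ K, ‖y‖ ≤ R := by
      intro y hy
      simpa [Metric.mem_closedBall, dist_eq_norm] using hRK hy
    -- distance estimates
    have hdist : ∀ y ∈ K, ∀ x' ∈ Metric.ball x 1, 1 ≤ ‖x' - y‖ := by
      intro y hy x' hx'
      have h1 : ‖x - y‖ ≤ ‖x - x'‖ + ‖x' - y‖ := by
        have := dist_triangle x x' y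
        simpa [dist_eq_norm] using this
      have h2 : ‖x - x'‖ < 1 := by
        have := Metric.mem_ball.mp hx'
        rw [dist_eq_norm] at this
        rw [norm_sub_rev]
        exact this
      have h3 : ‖x‖ - ‖y‖ ≤ ‖x - y‖ := norm_sub_norm_le x y
      have h4 := hyR y hy
      linarith
    have hdistx : ∀ y ∈ K, 1 ≤ ‖x - y‖ := fun y hy =>
      hdist y hy x (Metric.mem_ball_self one_pos)
    -- the derivative family
    set F' : H3 → H3 → (H3 →L[ℝ] ℂ) :=
      fun x' y => (ρ y * hC κ x' y) • hPhi (x' - y) with hF'def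
    have hGmeasAE : ∀ x' : H3, AEStronglyMeasurable (fun y => helmholtzG κ x' y * ρ y) μ :=
      fun x' => ((measurable_helmholtzG κ x').aestronglyMeasurable.mul hρ.1)
    have hF'measAE : ∀ x' : H3, AEStronglyMeasurable (fun y => F' x' y) μ := by
      intro x'
      refine AEStronglyMeasurable.smul (f := fun y => ρ y * hC κ x' y)
        (g := fun y => hPhi (x' - y)) ?_ ?_
      · exact hρ.1.mul (measurable_hC κ x').aestronglyMeasurable
      · exact (continuous_hPhi.comp (continuous_const.sub continuous_id)).aestronglyMeasurable
    have hnormF' : ∀ (x' y : H3), 1 ≤ ‖x' - y‖ →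
        ‖F' x' y‖ ≤ (κ + 1) / (4 * Real.pi) * ‖ρ y‖ := by
      intro x' y h1
      have hr : (0:ℝ) < ‖x' - y‖ := lt_of_lt_of_le one_pos h1
      show ‖(ρ y * hC κ x' y) • hPhi (x' - y)‖ ≤ (κ + 1) / (4 * Real.pi) * ‖ρ y‖
      have hsm := norm_smul (ρ y * hC κ x' y) (hPhi (x' - y))
      rw [hsm, norm_mul]
      have h2 : ‖hPhi (x' - y)‖ ≤ ‖x' - y‖ := norm_hPhi_le _
      have e1 : ‖(((‖x' - y‖)⁻¹ : ℝ) : ℂ)‖ = ‖x' - y‖⁻¹ := by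
        rw [Complex.norm_real, Real.norm_eq_abs, abs_of_pos (by positivity)]
      have e2 : ‖Complex.I * (κ:ℂ) - ((‖x' - y‖ : ℝ) : ℂ)⁻¹‖ ≤ κ + 1 := by
        refine (norm_sub_le _ _).trans ?_
        have i1 : ‖Complex.I * (κ:ℂ)‖ = κ := by
          simp [abs_of_nonneg hκ.le]
        have i2 : ‖(((‖x' - y‖:ℝ)) : ℂ)⁻¹‖ ≤ 1 := by
          rw [norm_inv, Complex.norm_real, Real.norm_eq_abs, abs_of_pos hr]
          exact inv_le_one_of_one_le₀ h1
        rw [i1]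
        linarith
      have h3 : ‖hC κ x' y‖ ≤ ‖x' - y‖⁻¹ * (κ + 1) * (4 * Real.pi * ‖x' - y‖)⁻¹ := by
        unfold hC
        rw [norm_mul, norm_mul, norm_helmholtzG, e1]
        gcongr
      calc ‖ρ y‖ * ‖hC κ x' y‖ * ‖hPhi (x' - y)‖
          ≤ ‖ρ y‖ * (‖x' - y‖⁻¹ * (κ + 1) * (4 * Real.pi * ‖x' - y‖)⁻¹) * ‖x' - y‖ := by
            gcongr
        _ = ‖ρ y‖ * (κ + 1) * (4 * Real.pi * ‖x' - y‖)⁻¹ := by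
            field_simp
        _ ≤ ‖ρ y‖ * (κ + 1) * (4 * Real.pi)⁻¹ := by
            apply mul_le_mul_of_nonneg_left _
              (mul_nonneg (norm_nonneg _) (by linarith : (0:ℝ) ≤ κ + 1))
            apply inv_anti₀ (by positivity)
            nlinarith
        _ = (κ + 1) / (4 * Real.pi) * ‖ρ y‖ := by ring
    -- differentiation under the integral sign
    have hbound_int : Integrable (fun y => (κ + 1) / (4 * Real.pi) * ‖ρ y‖) μ :=
      hρ.norm.const_mul _
    have hderiv0 : HasFDerivAt (fun x' => ∫ y, helmholtzG κ x' y * ρ y ∂μ)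
        (∫ y, F' x y ∂μ) x := by
      apply hasFDerivAt_integral_of_dominated_of_fderiv_le
        (hs := Metric.ball_mem_nhds x one_pos)
        (bound := fun y => (κ + 1) / (4 * Real.pi) * ‖ρ y‖)
        (Filter.Eventually.of_forall hGmeasAE)
      · -- integrability of F x
        apply Integrable.mono' (hρ.norm.const_mul ((4 * Real.pi)⁻¹)) (hGmeasAE x)
        filter_upwards [hKae] with y hy
        rw [norm_mul, norm_helmholtzG]
        have h1 := hdistx y hy
        have : (4 * Real.pi * ‖x - y‖)⁻¹ ≤ (4 * Real.pi)⁻¹ := by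
          apply inv_anti₀ (by positivity)
          nlinarith
        calc (4 * Real.pi * ‖x - y‖)⁻¹ * ‖ρ y‖ ≤ (4 * Real.pi)⁻¹ * ‖ρ y‖ := by
              gcongr
          _ = (4 * Real.pi)⁻¹ * ‖ρ y‖ := rfl
      · exact hF'measAE x
      · filter_upwards [hKae] with y hy
        intro x' hx'
        exact hnormF' x' y (hdist y hy x' hx')
      · exact hbound_int
      · filter_upwards [hKae] with y hy
        intro x' hx'
        have h1 := hdist y hy x' hx'
        have hne : x' ≠ y := by
          intro h
          rw [h, sub_self, norm_zero] at h1
          linarith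
        have hd := (hasFDerivAt_helmholtzG κ y hne).mul_const (ρ y)
        have heq2 : F' x' y = ρ y • hC κ x' y • hPhi (x' - y) :=
          (smul_smul (ρ y) (hC κ x' y) (hPhi (x' - y))).symm
        rw [heq2]
        exact hd
    have hu' : u = fun x' => ∫ y, helmholtzG κ x' y * ρ y ∂μ := funext hu
    have hderiv : HasFDerivAt u (∫ y, F' x y ∂μ) x := by rw [hu']; exact hderiv0
    have hF'int : Integrable (fun y => F' x y) μ := by
      apply Integrable.mono' hbound_int (hF'measAE x)
      filter_upwards [hKae] with y hy
      exact hnormF' x y (hdistx y hy)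
    have happ : fderiv ℝ u x xh = ∫ y, F' x y xh ∂μ := by
      rw [hderiv.fderiv]
      exact ContinuousLinearMap.integral_apply hF'int xh
    -- integrability of integrands
    have hF_int : Integrable (fun y => helmholtzG κ x y * ρ y) μ := by
      apply Integrable.mono' (hρ.norm.const_mul ((4 * Real.pi)⁻¹)) (hGmeasAE x)
      filter_upwards [hKae] with y hy
      rw [norm_mul, norm_helmholtzG]
      have h1 := hdistx y hy
      have : (4 * Real.pi * ‖x - y‖)⁻¹ ≤ (4 * Real.pi)⁻¹ := by
        apply inv_anti₀ (by positivity)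
        nlinarith
      gcongr
    have hA_int : Integrable (fun y => F' x y xh) μ :=
      (ContinuousLinearMap.apply ℝ ℂ xh).integrable_comp hF'int
    have hB_int : Integrable (fun y => Complex.I * (κ:ℂ) * (helmholtzG κ x y * ρ y)) μ :=
      hF_int.const_mul _
    -- the key representation
    have hval : (‖x‖ : ℂ) * (fderiv ℝ u x xh - Complex.I * (κ:ℂ) * u x)
        = ∫ y, (‖x‖ : ℂ) * (F' x y xh - Complex.I * (κ:ℂ) * (helmholtzG κ x y * ρ y)) ∂μ := by
      rw [happ, hu x, ← integral_const_mul, ← integral_sub hA_int hB_int, ← integral_const_mul]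
    rw [hval]
    set D : ℝ := (κ * R ^ 2 + 1) / (Real.pi * ‖x‖) with hDdef
    have hbound2 : ∀ᵐ y ∂μ,
        ‖(‖x‖ : ℂ) * (F' x y xh - Complex.I * (κ:ℂ) * (helmholtzG κ x y * ρ y))‖
          ≤ D * ‖ρ y‖ := by
      filter_upwards [hKae] with y hy
      have h1 := hdistx y hy
      have hr : (0:ℝ) < ‖x - y‖ := lt_of_lt_of_le one_pos h1
      have hrC : ((‖x - y‖ : ℝ) : ℂ) ≠ 0 := by exact_mod_cast hr.ne'
      set r := ‖x - y‖ with hrdef2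
      set t : ℝ := inner ℝ (x - y) xh with htdef
      set s : ℝ := inner ℝ y xh with hsdef
      have hsy : |s| ≤ ‖y‖ := by
        calc |s| ≤ ‖y‖ * ‖xh‖ := by rw [hsdef]; exact abs_real_inner_le_norm y xh
          _ = ‖y‖ := by rw [hxhnorm, mul_one]
      have hyle := hyR y hy
      have hs : |s| ≤ R := hsy.trans hyle
      have hxx : (inner ℝ x xh : ℝ) = ‖x‖ := by
        rw [hxhdef, real_inner_smul_right, real_inner_self_eq_norm_sq]
        field_simp
      have ht : t = ‖x‖ - s := by
        rw [htdef, inner_sub_left, hxx, hsdef]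
      have hinner_xy : (inner ℝ x y : ℝ) = ‖x‖ * s := by
        rw [hsdef, hxhdef, real_inner_smul_right, real_inner_comm]
        field_simp
      have hr_sq : r ^ 2 = ‖x‖ ^ 2 - 2 * (‖x‖ * s) + ‖y‖ ^ 2 := by
        rw [hrdef2, ← hinner_xy]
        exact norm_sub_sq_real x y
      have hr2 : ‖x‖ ≤ 2 * r := by
        have h3 : ‖x‖ - ‖y‖ ≤ r := by rw [hrdef2]; exact norm_sub_norm_le x y
        linarith
      clear_value t s r
      have hs2 : s ^ 2 ≤ ‖y‖ ^ 2 := by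
        nlinarith [sq_abs s, abs_nonneg s, norm_nonneg y]
      have hy2 : ‖y‖ ^ 2 ≤ R ^ 2 := by nlinarith [norm_nonneg y]
      have hdiff_sq : r ^ 2 - t ^ 2 = ‖y‖ ^ 2 - s ^ 2 := by
        rw [ht, hr_sq]; ring
      have ht0 : 0 ≤ t := by
        have := abs_le.mp hs
        rw [ht]
        linarith
      have hrt_pos : 0 ≤ r ^ 2 - t ^ 2 := by rw [hdiff_sq]; linarith
      have hrt_le : r ^ 2 - t ^ 2 ≤ R ^ 2 := by rw [hdiff_sq]; linarith [sq_nonneg s]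
      have htle : t ≤ r := by nlinarith
      have hta : |t| ≤ r := by
        rw [abs_of_nonneg ht0]
        exact htle
      have htr : |t - r| * r ≤ R ^ 2 := by
        rw [abs_of_nonpos (by linarith)]
        nlinarith
      -- the algebraic identity
      have hFapp : F' x y xh = (ρ y * hC κ x y) * ((t : ℝ) : ℂ) := by
        show ((ρ y * hC κ x y) • hPhi (x - y)) xh = _
        simp only [ContinuousLinearMap.smul_apply, hPhi, ContinuousLinearMap.comp_apply,
          Complex.ofRealCLM_apply, innerSL_apply_apply, smul_eq_mul]
        rw [htdef]
      have hid : (ρ y * hC κ x y) * ((t : ℝ) : ℂ)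
          - Complex.I * (κ:ℂ) * (helmholtzG κ x y * ρ y)
          = ρ y * helmholtzG κ x y *
            (Complex.I * (κ:ℂ) * (((t - r) / r : ℝ) : ℂ) - (((t / r ^ 2) : ℝ) : ℂ)) := by
        unfold hC
        rw [← hrdef2]
        have hrne : r ≠ 0 := hr.ne'
        have hrCne : (r : ℂ) ≠ 0 := by exact_mod_cast hrne
        push_cast
        field_simp
        ring
      rw [hFapp, hid]
      have hX : ‖Complex.I * (κ:ℂ) * (((t - r) / r : ℝ) : ℂ) - (((t / r ^ 2) : ℝ) : ℂ)‖
          ≤ κ * |(t - r) / r| + |t / r ^ 2| := by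
        refine (norm_sub_le _ _).trans (le_of_eq ?_)
        simp only [norm_mul, Complex.norm_I, one_mul, Complex.norm_real, Real.norm_eq_abs,
          abs_of_nonneg hκ.le]
      have hnx : ‖((‖x‖ : ℝ) : ℂ)‖ = ‖x‖ := by
        rw [Complex.norm_real, Real.norm_eq_abs, abs_of_pos hx0]
      have hGn : ‖helmholtzG κ x y‖ = (4 * Real.pi * r)⁻¹ := by
        rw [norm_helmholtzG, ← hrdef2]
      have hmain := real_est hκ.le h1 hx0 hr2 hta htr
      calc ‖(‖x‖ : ℂ) * (ρ y * helmholtzG κ x y *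
            (Complex.I * (κ:ℂ) * (((t - r) / r : ℝ) : ℂ) - (((t / r ^ 2) : ℝ) : ℂ)))‖
          = ‖ρ y‖ * (‖x‖ * ((4 * Real.pi * r)⁻¹ *
              ‖Complex.I * (κ:ℂ) * (((t - r) / r : ℝ) : ℂ) - (((t / r ^ 2) : ℝ) : ℂ)‖)) := by
            rw [norm_mul, norm_mul, norm_mul, hnx, hGn]
            ring
        _ ≤ ‖ρ y‖ * (‖x‖ * ((4 * Real.pi * r)⁻¹ * (κ * |(t - r) / r| + |t / r ^ 2|))) := by
            have hrpos : (0:ℝ) < r := hr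
            gcongr
        _ ≤ ‖ρ y‖ * ((κ * R ^ 2 + 1) / (Real.pi * ‖x‖)) :=
            mul_le_mul_of_nonneg_left hmain (norm_nonneg _)
        _ = D * ‖ρ y‖ := by rw [hDdef]; ring
    have hDnn : 0 ≤ D := by
      rw [hDdef]; positivity
    calc ‖∫ y, (‖x‖ : ℂ) * (F' x y xh - Complex.I * (κ:ℂ) * (helmholtzG κ x y * ρ y)) ∂μ‖
        ≤ ∫ y, D * ‖ρ y‖ ∂μ :=
          norm_integral_le_of_norm_le (hρ.norm.const_mul D) hbound2
      _ = D * ∫ y, ‖ρ y‖ ∂μ := integral_const_mul D _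
      _ = C / ‖x‖ := by
          rw [hCdef, hDdef]
          field_simp
          try ring
  -- conclude via squeeze
  apply tendsto_zero_iff_norm_tendsto_zero.mpr
  have hcomap : Filter.Tendsto (fun x : H3 => ‖x‖)
      (Filter.comap (fun x : H3 => ‖x‖) Filter.atTop) Filter.atTop :=
    Filter.tendsto_comap
  have hg : Filter.Tendsto (fun x : H3 => C / ‖x‖)
      (Filter.comap (fun x : H3 => ‖x‖) Filter.atTop) (nhds 0) :=
    Filter.Tendsto.div_atTop tendsto_const_nhds hcomap
  apply squeeze_zero' (Filter.Eventually.of_forall fun x => norm_nonneg _) _ hg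
  exact (hcomap.eventually (Filter.eventually_ge_atTop (2 * R + 2))).mono key
end

section
/- Let κ > 0 and let μ be a finite complex measure on ℝ³ with compact support. Define the single layer potential u(x) = ∫ G(x,y) dμ(y) and the function u_∞ on the unit sphere by u_∞(x̂) = (1/4π) ∫ e^{−iκ⟨x̂, y⟩} dμ(y). Then ‖x‖₂ · e^{−iκ‖x‖₂} · u(x) − u_∞(x/‖x‖₂) → 0 as ‖x‖₂ → ∞; in particular u admits the asymptotic expansion u(x) = (e^{iκ‖x‖₂}/‖x‖₂)·( u_∞(x/‖x‖₂) + O(1/‖x‖₂) ), so u_∞ is the far-field pattern of u. -/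
open MeasureTheory
open scoped RealInnerProductSpace

lemma expI_lip (a b : ℝ) : ‖Complex.exp ((a:ℂ) * Complex.I) - Complex.exp ((b:ℂ) * Complex.I)‖ ≤ |a - b| := by
  have h : ∀ t : ℝ, HasDerivAt (fun s : ℝ => Complex.exp ((s:ℂ) * Complex.I)) (Complex.I * Complex.exp ((t:ℂ)*Complex.I)) t := by
    intro t
    have h1 : HasDerivAt (fun s : ℝ => ((s:ℂ) * Complex.I)) Complex.I t := by
      simpa using (hasDerivAt_id (t:ℂ)).mul_const Complex.I |>.comp_ofReal
    simpa [mul_comm, Function.comp_def] using (Complex.hasDerivAt_exp ((t:ℂ)*Complex.I)).comp t h1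
  have := Convex.norm_image_sub_le_of_norm_hasDerivWithin_le
    (f := fun s : ℝ => Complex.exp ((s:ℂ) * Complex.I))
    (f' := fun t => Complex.I * Complex.exp ((t:ℂ)*Complex.I)) (C := 1)
    (fun t _ => (h t).hasDerivWithinAt)
    (fun t _ => by simp [Complex.norm_exp]) (convex_univ) (Set.mem_univ b) (Set.mem_univ a)
  simpa [Real.dist_eq] using this

lemma key_ineq (r d p m M : ℝ) (hd : 0 < d) (hr : 0 < r)
    (hsq : d^2 = r^2 - 2*p + m^2) (hp : |p| ≤ r*m) (hm : 0 ≤ m) (hmM : m ≤ M)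
    (hdr : |d - r| ≤ m) : |d - r + p/r| ≤ 2*M^2 / r := by
  rw [abs_le] at hp hdr ⊢
  obtain ⟨hp1, hp2⟩ := hp
  obtain ⟨hd1, hd2⟩ := hdr
  have h1 : d - r + p/r = (r*m^2 + p*(d-r)) / (r*(d+r)) := by
    field_simp
    nlinarith [hsq]
  have hdr' : 0 < d + r := by linarith
  have e1 : 0 ≤ (r*m - p) * (m + (d - r)) := by
    apply mul_nonneg <;> linarith
  have e2 : 0 ≤ (r*m + p) * (m - (d - r)) := by
    apply mul_nonneg <;> linarith
  have e3 : 0 ≤ (r*m - p) * (m - (d - r)) := by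
    apply mul_nonneg <;> linarith
  have e4 : 0 ≤ (r*m + p) * (m + (d - r)) := by
    apply mul_nonneg <;> linarith
  have hm2 : m^2 ≤ M^2 := by nlinarith
  rw [h1]
  constructor
  · rw [show -(2*M^2/r) = (-(2*M^2))/r by ring, div_le_div_iff₀ hr (by positivity)]
    nlinarith [mul_pos hr hdr']
  · rw [div_le_div_iff₀ (by positivity) hr]
    nlinarith [mul_pos hr hdr']

lemma pointwise_est (κ M : ℝ) (hκ : 0 < κ) (hM : 1 ≤ M)
    (x y : EuclideanSpace ℝ (Fin 3)) (hy : ‖y‖ ≤ M) (hx : 2*M ≤ ‖x‖) :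
    ‖(‖x‖ : ℂ) * Complex.exp (-(Complex.I * (κ:ℂ) * (‖x‖ : ℂ))) * helmholtzG κ x y
      - (4 * (Real.pi:ℂ))⁻¹ * Complex.exp (-(Complex.I * (κ:ℂ) * ((⟪‖x‖⁻¹ • x, y⟫ : ℝ):ℂ)))‖
      ≤ (4 * Real.pi)⁻¹ * (2*M + 2*κ*M^2) / ‖x‖ := by
  set r : ℝ := ‖x‖ with hrdef
  set d : ℝ := ‖x - y‖ with hddef
  set p : ℝ := (⟪x, y⟫ : ℝ) with hpdef
  have hr : 0 < r := by dsimp [r]; linarith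
  have hdlow : r - ‖y‖ ≤ d := by
    simpa [hrdef, hddef] using norm_sub_norm_le x y
  have hd : 0 < d := by linarith
  have hdrabs : |d - r| ≤ ‖y‖ := by
    have := abs_norm_sub_norm_le (x - y) x
    simpa [hddef, hrdef] using this
  have hdrM : |d - r| ≤ M := le_trans hdrabs hy
  have hsq : d^2 = r^2 - 2*p + ‖y‖^2 := by
    simpa [hddef, hrdef, hpdef] using (norm_sub_sq_real x y)
  have hp : |p| ≤ r * ‖y‖ := abs_real_inner_le_norm x y
  have hinner : (⟪‖x‖⁻¹ • x, y⟫ : ℝ) = r⁻¹ * p := by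
    rw [real_inner_smul_left]
  set s : ℝ := r⁻¹ * p with hsdef
  set a : ℝ := κ * (d - r) with hadef
  set b : ℝ := -(κ * s) with hbdef
  have hπ : (0:ℝ) < Real.pi := Real.pi_pos
  have hd0 : (d : ℂ) ≠ 0 := by exact_mod_cast ne_of_gt hd
  have hπ0 : (4 * (Real.pi:ℂ)) ≠ 0 := by
    simp [Complex.ext_iff, Real.pi_ne_zero]
  have e1 : Complex.exp (((a:ℝ):ℂ)*Complex.I)
      = Complex.exp (-(Complex.I*(κ:ℂ)*(r:ℂ))) * Complex.exp (Complex.I*(κ:ℂ)*(d:ℂ)) := by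
    rw [← Complex.exp_add]; congr 1; push_cast [hadef]; ring
  have e2 : Complex.exp (((b:ℝ):ℂ)*Complex.I)
      = Complex.exp (-(Complex.I*(κ:ℂ)*((s:ℝ):ℂ))) := by
    congr 1; push_cast [hbdef]; ring
  have heq : (r : ℂ) * Complex.exp (-(Complex.I * (κ:ℂ) * (r : ℂ))) * helmholtzG κ x y
      - (4 * (Real.pi:ℂ))⁻¹ * Complex.exp (-(Complex.I * (κ:ℂ) * ((⟪‖x‖⁻¹ • x, y⟫ : ℝ):ℂ)))
      = (4 * (Real.pi:ℂ))⁻¹ * ((((r - d : ℝ)):ℂ)/(d:ℂ) * Complex.exp ((a:ℂ)*Complex.I)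
          + (Complex.exp ((a:ℂ)*Complex.I) - Complex.exp ((b:ℂ)*Complex.I))) := by
    rw [hinner, helmholtzG, ← hddef, e1, e2]
    field_simp
    push_cast
    ring
  rw [heq]
  rw [norm_mul]
  have hnormc : ‖(4 * (Real.pi:ℂ))⁻¹‖ = (4 * Real.pi)⁻¹ := by
    have h4 : (4 * (Real.pi:ℂ))⁻¹ = ((((4*Real.pi)⁻¹ : ℝ)):ℂ) := by push_cast; ring
    rw [h4, Complex.norm_real, Real.norm_eq_abs, abs_of_pos (by positivity)]
  rw [hnormc]
  have hbound : ‖(((r - d : ℝ)):ℂ)/(d:ℂ) * Complex.exp ((a:ℂ)*Complex.I)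
      + (Complex.exp ((a:ℂ)*Complex.I) - Complex.exp ((b:ℂ)*Complex.I))‖
      ≤ (2*M + 2*κ*M^2) / r := by
    have t1 : ‖(((r - d : ℝ)):ℂ)/(d:ℂ) * Complex.exp ((a:ℂ)*Complex.I)‖ ≤ 2*M/r := by
      rw [norm_mul, Complex.norm_exp_ofReal_mul_I, mul_one, norm_div]
      have : ‖((r - d : ℝ):ℂ)‖ = |r - d| := by norm_cast
      rw [this]
      have : ‖((d : ℝ):ℂ)‖ = d := by
        norm_cast; exact abs_of_pos hd
      rw [this]
      have h1 : |r - d| ≤ M := by rw [abs_sub_comm]; exact hdrM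
      have h2 : r/2 ≤ d := by
        have : ‖y‖ ≤ M := hy
        linarith
      rw [div_le_div_iff₀ hd hr]
      nlinarith
    have t2 : ‖Complex.exp ((a:ℂ)*Complex.I) - Complex.exp ((b:ℂ)*Complex.I)‖ ≤ 2*κ*M^2/r := by
      refine le_trans (expI_lip a b) ?_
      have : a - b = κ * (d - r + p/r) := by
        rw [hadef, hbdef, hsdef]; field_simp; ring
      rw [this, abs_mul, abs_of_pos hκ]
      have := key_ineq r d p ‖y‖ M hd hr hsq hp (norm_nonneg y) hy hdrabs
      calc κ * |d - r + p/r| ≤ κ * (2*M^2/r) := by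
            exact mul_le_mul_of_nonneg_left this (le_of_lt hκ)
        _ = 2*κ*M^2/r := by ring
    calc ‖_ + _‖ ≤ _ + _ := norm_add_le _ _
      _ ≤ 2*M/r + 2*κ*M^2/r := add_le_add t1 t2
      _ = (2*M + 2*κ*M^2) / r := by ring
  calc (4*Real.pi)⁻¹ * ‖_‖ ≤ (4*Real.pi)⁻¹ * ((2*M + 2*κ*M^2)/r) :=
        mul_le_mul_of_nonneg_left hbound (by positivity)
    _ = (4*Real.pi)⁻¹ * (2*M + 2*κ*M^2) / r := by ring

/-- Let `κ > 0` and let a finite complex measure with compact support be given, encoded as a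
finite positive measure `μ` with an integrable complex density `ρ`, supported in a compact set
`K` (`μ(Kᶜ) = 0`).  Define the single layer potential `u(x) = ∫ G(x,y) ρ(y) dμ(y)` and
`u_∞(xhat) = (1/4π) ∫ e^{−iκ⟨xhat,y⟩} ρ(y) dμ(y)`.  Then
`‖x‖ e^{−iκ‖x‖} u(x) − u_∞(x/‖x‖) → 0` as `‖x‖ → ∞`; moreover this difference is `O(1/‖x‖)`,
i.e. `u(x) = (e^{iκ‖x‖}/‖x‖)(u_∞(x/‖x‖) + O(1/‖x‖))`, so `u_∞` is the far-field pattern. -/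
theorem singleLayerPotential_farFieldPattern (κ : ℝ) (hκ : 0 < κ)
    (μ : Measure (EuclideanSpace ℝ (Fin 3))) [IsFiniteMeasure μ]
    (ρ : EuclideanSpace ℝ (Fin 3) → ℂ) (hρ : Integrable ρ μ)
    (K : Set (EuclideanSpace ℝ (Fin 3))) (hK : IsCompact K) (hsupp : μ Kᶜ = 0)
    (u uInf : EuclideanSpace ℝ (Fin 3) → ℂ)
    (hu : ∀ x, u x = ∫ y, helmholtzG κ x y * ρ y ∂μ)
    (huInf : ∀ xhat, uInf xhat =
      (4 * (Real.pi : ℂ))⁻¹ * ∫ y, Complex.exp (-(Complex.I * (κ : ℂ) * ((⟪xhat, y⟫ : ℝ) : ℂ))) * ρ y ∂μ) :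
    Filter.Tendsto
      (fun x : EuclideanSpace ℝ (Fin 3) =>
        (‖x‖ : ℂ) * Complex.exp (-(Complex.I * (κ : ℂ) * (‖x‖ : ℂ))) * u x - uInf (‖x‖⁻¹ • x))
      (Filter.comap (fun x : EuclideanSpace ℝ (Fin 3) => ‖x‖) Filter.atTop) (nhds 0) ∧
    ∃ C > (0 : ℝ), ∃ R > (0 : ℝ), ∀ x : EuclideanSpace ℝ (Fin 3), R ≤ ‖x‖ →
      ‖(‖x‖ : ℂ) * Complex.exp (-(Complex.I * (κ : ℂ) * (‖x‖ : ℂ))) * u x - uInf (‖x‖⁻¹ • x)‖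
        ≤ C / ‖x‖ := by
  obtain ⟨M0, hM0⟩ := hK.isBounded.subset_closedBall 0
  set M : ℝ := max M0 1 with hMdef
  have hM : 1 ≤ M := le_max_right _ _
  have hKM : ∀ y ∈ K, ‖y‖ ≤ M := by
    intro y hy
    have := hM0 hy
    simp only [Metric.mem_closedBall, dist_zero_right] at this
    exact le_trans this (le_max_left _ _)
  have haeK : ∀ᵐ y ∂μ, y ∈ K := by
    rw [MeasureTheory.ae_iff]
    exact hsupp
  set C0 : ℝ := (4 * Real.pi)⁻¹ * (2*M + 2*κ*M^2) with hC0def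
  have hC0 : 0 < C0 := by positivity
  set Itot : ℝ := ∫ y, ‖ρ y‖ ∂μ with hItot
  have hItot0 : 0 ≤ Itot := integral_nonneg fun y => norm_nonneg _
  set C : ℝ := C0 * Itot + 1 with hCdef
  have hC : 0 < C := by positivity
  have hmain : ∀ x : EuclideanSpace ℝ (Fin 3), 2*M ≤ ‖x‖ →
      ‖(‖x‖ : ℂ) * Complex.exp (-(Complex.I * (κ : ℂ) * (‖x‖ : ℂ))) * u x - uInf (‖x‖⁻¹ • x)‖
        ≤ C / ‖x‖ := by
    intro x hx
    have hr : 0 < ‖x‖ := by have : (1:ℝ) ≤ M := hM; linarith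
    -- measurability of the kernel
    have hGmeas : AEStronglyMeasurable (fun y => helmholtzG κ x y) μ := by
      apply Measurable.aestronglyMeasurable
      apply Measurable.div
      · apply Complex.measurable_exp.comp
        apply Measurable.mul measurable_const
        exact (Complex.measurable_ofReal.comp ((continuous_const.sub continuous_id).norm.measurable))
      · apply Measurable.mul measurable_const
        exact (Complex.measurable_ofReal.comp ((continuous_const.sub continuous_id).norm.measurable))
    have hGbound : ∀ᵐ y ∂μ, ‖helmholtzG κ x y * ρ y‖ ≤ ‖ρ y‖ := by
      filter_upwards [haeK] with y hy
      have hyM : ‖y‖ ≤ M := hKM y hy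
      have hd : 1 ≤ ‖x - y‖ := by
        have := norm_sub_norm_le x y
        linarith
      have hπ : (1:ℝ) ≤ Real.pi := by linarith [Real.pi_gt_three]
      rw [norm_mul]
      have : ‖helmholtzG κ x y‖ ≤ 1 := by
        rw [helmholtzG, norm_div, norm_mul, norm_mul]
        have he : ‖Complex.exp (Complex.I * (κ:ℂ) * ((‖x-y‖:ℝ):ℂ))‖ = 1 := by
          rw [Complex.norm_exp]
          simp [Complex.mul_re]
        rw [he]
        have h4 : ‖(4:ℂ)‖ = 4 := by norm_num
        have hπn : ‖((Real.pi:ℝ):ℂ)‖ = Real.pi := by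
          rw [Complex.norm_real, Real.norm_eq_abs, abs_of_pos Real.pi_pos]
        have hdn : ‖((‖x-y‖:ℝ):ℂ)‖ = ‖x - y‖ := by
          rw [Complex.norm_real, Real.norm_eq_abs, abs_of_nonneg (norm_nonneg _)]
        rw [h4, hπn, hdn]
        rw [div_le_one (by positivity)]
        nlinarith
      calc ‖helmholtzG κ x y‖ * ‖ρ y‖ ≤ 1 * ‖ρ y‖ :=
            mul_le_mul_of_nonneg_right this (norm_nonneg _)
        _ = ‖ρ y‖ := one_mul _
    have hInt1 : Integrable (fun y => helmholtzG κ x y * ρ y) μ :=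
      Integrable.mono' hρ.norm (hGmeas.mul hρ.1) hGbound
    have hemeas : AEStronglyMeasurable
        (fun y => Complex.exp (-(Complex.I * (κ:ℂ) * ((⟪‖x‖⁻¹ • x, y⟫ : ℝ):ℂ)))) μ := by
      apply Continuous.aestronglyMeasurable
      apply Complex.continuous_exp.comp
      apply Continuous.neg
      apply Continuous.mul continuous_const
      exact Complex.continuous_ofReal.comp (continuous_const.inner continuous_id)
    have heunit : ∀ y, ‖Complex.exp (-(Complex.I * (κ:ℂ) * ((⟪‖x‖⁻¹ • x, y⟫ : ℝ):ℂ)))‖ = 1 := by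
      intro y
      rw [Complex.norm_exp]
      simp [Complex.mul_re]
    have hInt2 : Integrable
        (fun y => Complex.exp (-(Complex.I * (κ:ℂ) * ((⟪‖x‖⁻¹ • x, y⟫ : ℝ):ℂ))) * ρ y) μ := by
      apply Integrable.mono' hρ.norm (hemeas.mul hρ.1)
      filter_upwards with y
      simp only [Pi.mul_apply, norm_mul, heunit y, one_mul]
      exact le_refl _
    have hdiff : (‖x‖ : ℂ) * Complex.exp (-(Complex.I * (κ : ℂ) * (‖x‖ : ℂ))) * u x
          - uInf (‖x‖⁻¹ • x)
        = ∫ y, ((‖x‖ : ℂ) * Complex.exp (-(Complex.I * (κ : ℂ) * (‖x‖ : ℂ))) * helmholtzG κ x y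
            - (4 * (Real.pi:ℂ))⁻¹ * Complex.exp (-(Complex.I * (κ:ℂ) * ((⟪‖x‖⁻¹ • x, y⟫ : ℝ):ℂ)))) * ρ y ∂μ := by
      rw [hu x, huInf (‖x‖⁻¹ • x), ← integral_const_mul, ← integral_const_mul,
        ← integral_sub (hInt1.const_mul _) (hInt2.const_mul _)]
      congr 1
      ext y
      ring
    rw [hdiff]
    have hbnd : ∀ᵐ y ∂μ, ‖((‖x‖ : ℂ) * Complex.exp (-(Complex.I * (κ : ℂ) * (‖x‖ : ℂ))) * helmholtzG κ x y
            - (4 * (Real.pi:ℂ))⁻¹ * Complex.exp (-(Complex.I * (κ:ℂ) * ((⟪‖x‖⁻¹ • x, y⟫ : ℝ):ℂ)))) * ρ y‖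
          ≤ (C0 / ‖x‖) * ‖ρ y‖ := by
      filter_upwards [haeK] with y hy
      rw [norm_mul]
      apply mul_le_mul_of_nonneg_right _ (norm_nonneg _)
      exact pointwise_est κ M hκ hM x y (hKM y hy) hx
    have hIntF : Integrable (fun y =>
        ((‖x‖ : ℂ) * Complex.exp (-(Complex.I * (κ : ℂ) * (‖x‖ : ℂ))) * helmholtzG κ x y
            - (4 * (Real.pi:ℂ))⁻¹ * Complex.exp (-(Complex.I * (κ:ℂ) * ((⟪‖x‖⁻¹ • x, y⟫ : ℝ):ℂ)))) * ρ y) μ := by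
      have : (fun y =>
          ((‖x‖ : ℂ) * Complex.exp (-(Complex.I * (κ : ℂ) * (‖x‖ : ℂ))) * helmholtzG κ x y
              - (4 * (Real.pi:ℂ))⁻¹ * Complex.exp (-(Complex.I * (κ:ℂ) * ((⟪‖x‖⁻¹ • x, y⟫ : ℝ):ℂ)))) * ρ y)
          = fun y =>
            (‖x‖ : ℂ) * Complex.exp (-(Complex.I * (κ : ℂ) * (‖x‖ : ℂ))) * (helmholtzG κ x y * ρ y)
            - (4 * (Real.pi:ℂ))⁻¹ * (Complex.exp (-(Complex.I * (κ:ℂ) * ((⟪‖x‖⁻¹ • x, y⟫ : ℝ):ℂ))) * ρ y) := by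
        ext y; ring
      rw [this]
      exact (hInt1.const_mul _).sub (hInt2.const_mul _)
    calc ‖∫ y, _ ∂μ‖ ≤ ∫ y, ‖((‖x‖ : ℂ) * Complex.exp (-(Complex.I * (κ : ℂ) * (‖x‖ : ℂ))) * helmholtzG κ x y
            - (4 * (Real.pi:ℂ))⁻¹ * Complex.exp (-(Complex.I * (κ:ℂ) * ((⟪‖x‖⁻¹ • x, y⟫ : ℝ):ℂ)))) * ρ y‖ ∂μ :=
          norm_integral_le_integral_norm _
      _ ≤ ∫ y, (C0 / ‖x‖) * ‖ρ y‖ ∂μ :=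
          integral_mono_ae hIntF.norm (hρ.norm.const_mul _) hbnd
      _ = (C0 / ‖x‖) * Itot := integral_const_mul _ _
      _ ≤ C / ‖x‖ := by
          rw [hCdef, div_mul_eq_mul_div, div_le_div_iff₀ hr hr]
          nlinarith
  constructor
  · rw [tendsto_zero_iff_norm_tendsto_zero]
    have h1 : Filter.Tendsto (fun x : EuclideanSpace ℝ (Fin 3) => ‖x‖)
        (Filter.comap (fun x : EuclideanSpace ℝ (Fin 3) => ‖x‖) Filter.atTop) Filter.atTop :=
      Filter.tendsto_comap
    have hCten : Filter.Tendsto (fun x : EuclideanSpace ℝ (Fin 3) => C / ‖x‖)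
        (Filter.comap (fun x : EuclideanSpace ℝ (Fin 3) => ‖x‖) Filter.atTop) (nhds 0) :=
      Filter.Tendsto.div_atTop tendsto_const_nhds h1
    apply squeeze_zero' (Filter.Eventually.of_forall fun _ => norm_nonneg _) _ hCten
    filter_upwards [h1.eventually (Filter.eventually_ge_atTop (2*M))] with x hx
    exact hmain x hx
  · exact ⟨C, hC, 2*M, by linarith, hmain⟩
end

section
/- Let F: ℝ² → ℝ³ and f, g: ℝ² → ℝ be differentiable at a point x̂ with a(x̂) := ‖∂₁F(x̂) × ∂₂F(x̂)‖₂ ≠ 0, and let K(x̂) = [⟨∂_kF(x̂), ∂_lF(x̂)⟩]_{k,l=1}^2 be the first fundamental tensor. Then the surface curl vectors v_f = ∂₁f·∂₂F − ∂₂f·∂₁F and v_g = ∂₁g·∂₂F − ∂₂g·∂₁F (all evaluated at x̂) satisfy ⟨v_f, v_g⟩ = a(x̂)² · (∇f(x̂))ᵀ K(x̂)^{-1} ∇g(x̂). Consequently, the inner product of the surface curls curl_Γ(f∘F⁻¹) = v_f/a and curl_Γ(g∘F⁻¹) = v_g/a equals (∇f)ᵀK^{-1}∇g, which is the identity underlying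 the regularized Galerkin representation of the hypersingular operator. -/
open scoped RealInnerProductSpace

/-- The cross product on `ℝ³` (as a Euclidean space). -/
noncomputable def cross3 (a b : EuclideanSpace ℝ (Fin 3)) : EuclideanSpace ℝ (Fin 3) :=
  (WithLp.equiv 2 (Fin 3 → ℝ)).symm
    ![a 1 * b 2 - a 2 * b 1, a 2 * b 0 - a 0 * b 2, a 0 * b 1 - a 1 * b 0]

/-- Let `F : ℝ² → ℝ³` and `f, g : ℝ² → ℝ` be differentiable at `x̂` with surface measure
`a(x̂) = ‖∂₁F(x̂) × ∂₂F(x̂)‖ ≠ 0`, and let `K(x̂)` be the first fundamental tensor.  Then the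
(unnormalized) surface curl vectors `v_f = ∂₁f·∂₂F − ∂₂f·∂₁F` and `v_g = ∂₁g·∂₂F − ∂₂g·∂₁F`
satisfy `⟨v_f, v_g⟩ = a(x̂)²·(∇f)ᵀ K(x̂)⁻¹ ∇g`; consequently the surface curls `v_f/a` and
`v_g/a` satisfy `⟨v_f/a, v_g/a⟩ = (∇f)ᵀ K(x̂)⁻¹ ∇g`, the identity underlying the regularized
Galerkin representation of the hypersingular operator. -/
theorem surfaceCurl_inner_eq_grad_firstFundamentalTensor_inv_grad
    (F : EuclideanSpace ℝ (Fin 2) → EuclideanSpace ℝ (Fin 3))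
    (f g : EuclideanSpace ℝ (Fin 2) → ℝ)
    (xhat : EuclideanSpace ℝ (Fin 2))
    (hF : DifferentiableAt ℝ F xhat) (hf : DifferentiableAt ℝ f xhat)
    (hg : DifferentiableAt ℝ g xhat)
    (a : ℝ)
    (ha : a = ‖cross3 (fderiv ℝ F xhat (EuclideanSpace.single 0 1))
                      (fderiv ℝ F xhat (EuclideanSpace.single 1 1))‖)
    (hane : a ≠ 0)
    (Kmat : Matrix (Fin 2) (Fin 2) ℝ)
    (hKmat : Kmat = Matrix.of fun k l : Fin 2 =>
      (⟪fderiv ℝ F xhat (EuclideanSpace.single k 1),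
        fderiv ℝ F xhat (EuclideanSpace.single l 1)⟫ : ℝ))
    (vf vg : EuclideanSpace ℝ (Fin 3))
    (hvf : vf = fderiv ℝ f xhat (EuclideanSpace.single 0 1) •
                  fderiv ℝ F xhat (EuclideanSpace.single 1 1)
              - fderiv ℝ f xhat (EuclideanSpace.single 1 1) •
                  fderiv ℝ F xhat (EuclideanSpace.single 0 1))
    (hvg : vg = fderiv ℝ g xhat (EuclideanSpace.single 0 1) •
                  fderiv ℝ F xhat (EuclideanSpace.single 1 1)
              - fderiv ℝ g xhat (EuclideanSpace.single 1 1) •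
                  fderiv ℝ F xhat (EuclideanSpace.single 0 1))
    (gradf gradg : Fin 2 → ℝ)
    (hgradf : gradf = fun i => fderiv ℝ f xhat (EuclideanSpace.single i 1))
    (hgradg : gradg = fun i => fderiv ℝ g xhat (EuclideanSpace.single i 1)) :
    (⟪vf, vg⟫ : ℝ) = a ^ 2 * dotProduct gradf (Kmat⁻¹.mulVec gradg) ∧
    (⟪a⁻¹ • vf, a⁻¹ • vg⟫ : ℝ) = dotProduct gradf (Kmat⁻¹.mulVec gradg) := by

  set e1 := fderiv ℝ F xhat (EuclideanSpace.single 0 1) with he1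
  set e2 := fderiv ℝ F xhat (EuclideanSpace.single 1 1) with he2
  set f1 := fderiv ℝ f xhat (EuclideanSpace.single 0 1) with hf1
  set f2 := fderiv ℝ f xhat (EuclideanSpace.single 1 1) with hf2
  set g1 := fderiv ℝ g xhat (EuclideanSpace.single 0 1) with hg1
  set g2 := fderiv ℝ g xhat (EuclideanSpace.single 1 1) with hg2
  have ha2 : a ^ 2 = ⟪cross3 e1 e2, cross3 e1 e2⟫ := by
    rw [ha, real_inner_self_eq_norm_sq]
  have hcross : (⟪cross3 e1 e2, cross3 e1 e2⟫ : ℝ) =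
      (e1 1 * e2 2 - e1 2 * e2 1)^2 + (e1 2 * e2 0 - e1 0 * e2 2)^2
        + (e1 0 * e2 1 - e1 1 * e2 0)^2 := by
    simp [cross3, PiLp.inner_apply, Fin.sum_univ_three, EuclideanSpace.real_norm_sq_eq]
  have hdet : Kmat.det = a ^ 2 := by
    rw [hKmat, Matrix.det_fin_two, ha2, hcross]
    simp [PiLp.inner_apply, Fin.sum_univ_three]
    ring
  have hdetne : Kmat.det ≠ 0 := by rw [hdet]; positivity
  have hinv : Kmat⁻¹ = (Kmat.det)⁻¹ • Kmat.adjugate := by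
    rw [Matrix.inv_def, Ring.inverse_eq_inv]
  have hvv : (⟪vf, vg⟫ : ℝ) =
      f1 * g1 * ⟪e2, e2⟫ - f1 * g2 * ⟪e2, e1⟫ - f2 * g1 * ⟪e1, e2⟫
        + f2 * g2 * ⟪e1, e1⟫ := by
    rw [hvf, hvg]
    simp [inner_sub_left, inner_sub_right, real_inner_smul_left, real_inner_smul_right,
      PiLp.inner_apply, Fin.sum_univ_three, EuclideanSpace.real_norm_sq_eq]
    ring
  have hdot : dotProduct gradf (Kmat⁻¹.mulVec gradg) =
      (Kmat.det)⁻¹ * (f1 * g1 * ⟪e2, e2⟫ - f1 * g2 * ⟪e1, e2⟫ - f2 * g1 * ⟪e1, e2⟫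
        + f2 * g2 * ⟪e1, e1⟫) := by
    rw [hinv, hgradf, hgradg, hKmat]
    simp [dotProduct, Matrix.mulVec, Matrix.adjugate_fin_two, Fin.sum_univ_two,
      PiLp.inner_apply, Fin.sum_univ_three, EuclideanSpace.real_norm_sq_eq, ← he1, ← he2, ← hf1,
      ← hf2, ← hg1, ← hg2]
    ring
  have hsym : (⟪e2, e1⟫ : ℝ) = ⟪e1, e2⟫ := real_inner_comm _ _
  have main : (⟪vf, vg⟫ : ℝ) = a ^ 2 * dotProduct gradf (Kmat⁻¹.mulVec gradg) := by
    rw [hvv, hdot, hsym, ← hdet]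
    field_simp
  refine ⟨main, ?_⟩
  rw [real_inner_smul_left, real_inner_smul_right, main]
  field_simp
end

section
/- Let κ > 0, let μ be a finite (positive) measure on ℝ³ with compact support and w: ℝ³ → ℝ³ a bounded measurable vector field. Then the double layer potential u(x) = ∫ ⟨w(y), ∇_y G(x,y)⟩ dμ(y) satisfies the Sommerfeld radiation condition: with r = ‖x‖₂, r·( ⟨x/‖x‖₂, ∇u(x)⟩ − iκ u(x) ) → 0 as ‖x‖₂ → ∞. -/
open MeasureTheory

open Real Filter RealInnerProductSpace

noncomputable section

abbrev E3 := EuclideanSpace ℝ (Fin 3)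

/-- derivative of the norm in a real inner product space -/
lemma hasFDerivAt_norm' {x : E3} (hx : x ≠ 0) :
    HasFDerivAt (fun y : E3 => ‖y‖) (‖x‖⁻¹ • (innerSL ℝ x)) x := by
  have h1 : HasFDerivAt (fun y : E3 => ⟪y, y⟫)
      ((fderivInnerCLM ℝ (x, x)).comp ((ContinuousLinearMap.id ℝ E3).prod
        (ContinuousLinearMap.id ℝ E3))) x :=
    (hasFDerivAt_id x).inner ℝ (hasFDerivAt_id x)
  have hsq : (⟪x, x⟫ : ℝ) ≠ 0 := inner_self_ne_zero.2 hx
  have h2 : HasDerivAt Real.sqrt (1 / (2 * Real.sqrt ⟪x, x⟫)) (⟪x, x⟫) :=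
    Real.hasDerivAt_sqrt hsq
  have h3 := h2.comp_hasFDerivAt (f := fun y : E3 => ⟪y, y⟫) x h1
  have hnorm : ∀ y : E3, Real.sqrt ⟪y, y⟫ = ‖y‖ := by
    intro y; rw [real_inner_self_eq_norm_mul_norm, Real.sqrt_mul_self (norm_nonneg y)]
  have h4 : HasFDerivAt (fun y : E3 => ‖y‖)
      ((1 / (2 * Real.sqrt ⟪x, x⟫)) • ((fderivInnerCLM ℝ (x, x)).comp
        ((ContinuousLinearMap.id ℝ E3).prod (ContinuousLinearMap.id ℝ E3)))) x := by
    refine h3.congr_of_eventuallyEq ?_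
    filter_upwards with y using (hnorm y).symm
  refine h4.congr_fderiv ?_
  ext v
  have hxn : ‖x‖ ≠ 0 := norm_ne_zero_iff.2 hx
  rw [ContinuousLinearMap.smul_apply, ContinuousLinearMap.smul_apply,
    ContinuousLinearMap.comp_apply, ContinuousLinearMap.prod_apply,
    ContinuousLinearMap.id_apply, fderivInnerCLM_apply, innerSL_apply_apply,
    real_inner_comm v x, hnorm x]
  rw [smul_eq_mul, smul_eq_mul]
  field_simp
  ring

end

noncomputable section
open Complex

/-- q κ ρ = (iκρ-1)e^{iκρ}/(4πρ³), so that ∇φ(z)v = q(‖z‖)⟪z,v⟫, φ(z)=e^{iκ‖z‖}/(4π‖z‖) -/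
def qf (κ ρ : ℝ) : ℂ :=
  (Complex.I * κ * ρ - 1) * Complex.exp (Complex.I * κ * ρ) / (4 * Real.pi * ρ ^ 3)

/-- derivative of q -/
def qd (κ ρ : ℝ) : ℂ :=
  (-(κ:ℂ) ^ 2 * ρ ^ 2 - 3 * Complex.I * κ * ρ + 3) * Complex.exp (Complex.I * κ * ρ)
    / (4 * Real.pi * ρ ^ 4)

lemma hasDerivAt_ofReal (ρ : ℝ) : HasDerivAt (fun t : ℝ => (t : ℂ)) 1 ρ := by
  simpa using (hasDerivAt_id ρ).ofReal_comp

lemma hasDerivAt_cexp_iκ (κ ρ : ℝ) :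
    HasDerivAt (fun t : ℝ => Complex.exp (Complex.I * κ * t))
      (Complex.I * κ * Complex.exp (Complex.I * κ * ρ)) ρ := by
  have h1 : HasDerivAt (fun t : ℝ => Complex.I * κ * t) (Complex.I * κ) ρ := by
    simpa using (hasDerivAt_ofReal ρ).const_mul (Complex.I * κ)
  simpa [mul_comm] using h1.cexp

lemma hasDerivAt_qf {κ ρ : ℝ} (hρ : ρ ≠ 0) : HasDerivAt (qf κ) (qd κ ρ) ρ := by
  have hπ : (Real.pi : ℂ) ≠ 0 := Complex.ofReal_ne_zero.2 Real.pi_ne_zero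
  have hρ' : (ρ : ℂ) ≠ 0 := Complex.ofReal_ne_zero.2 hρ
  have hN : HasDerivAt (fun t : ℝ => (Complex.I * κ * t - 1) * Complex.exp (Complex.I * κ * t))
      (-(κ:ℂ)^2 * ρ * Complex.exp (Complex.I * κ * ρ)) ρ := by
    have h1 : HasDerivAt (fun t : ℝ => Complex.I * κ * (t:ℂ) - 1) (Complex.I * κ) ρ := by
      simpa using ((hasDerivAt_ofReal ρ).const_mul (Complex.I * κ)).sub_const 1
    have := h1.mul (hasDerivAt_cexp_iκ κ ρ)
    refine this.congr_deriv ?_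
    have : Complex.I * Complex.I = -1 := Complex.I_mul_I
    ring_nf
    rw [Complex.I_sq]
    ring
  have hD : HasDerivAt (fun t : ℝ => (4 * (Real.pi:ℂ) * (t:ℂ) ^ 3))
      ((12:ℂ) * Real.pi * (ρ:ℂ) ^ 2) ρ := by
    have := ((hasDerivAt_pow 3 ((ρ:ℂ))).comp_ofReal).const_mul (4 * (Real.pi:ℂ))
    refine this.congr_deriv ?_
    push_cast
    ring
  have hD0 : (4 * (Real.pi:ℂ) * (ρ:ℂ) ^ 3) ≠ 0 := by
    simp [hπ, hρ']
  have := hN.div hD hD0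
  refine this.congr_deriv ?_
  unfold qd
  field_simp
  ring

lemma hasDerivAt_gf (κ : ℝ) {ρ : ℝ} (hρ : ρ ≠ 0) :
    HasDerivAt (fun t : ℝ => Complex.exp (Complex.I * κ * t) / (4 * Real.pi * t))
      ((ρ:ℂ) * qf κ ρ) ρ := by
  have hπ : (Real.pi : ℂ) ≠ 0 := Complex.ofReal_ne_zero.2 Real.pi_ne_zero
  have hρ' : (ρ : ℂ) ≠ 0 := Complex.ofReal_ne_zero.2 hρ
  have hD : HasDerivAt (fun t : ℝ => (4 * (Real.pi:ℂ) * (t:ℂ)))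
      ((4:ℂ) * Real.pi) ρ := by
    simpa using (hasDerivAt_ofReal ρ).const_mul (4 * (Real.pi:ℂ))
  have hD0 : (4 * (Real.pi:ℂ) * (ρ:ℂ)) ≠ 0 := by simp [hπ, hρ']
  have := (hasDerivAt_cexp_iκ κ ρ).div hD hD0
  refine this.congr_deriv ?_
  unfold qf
  field_simp

lemma norm_exp_Iκρ (κ ρ : ℝ) : ‖Complex.exp (Complex.I * κ * ρ)‖ = 1 := by
  rw [Complex.norm_exp]
  simp

lemma norm_qf_le {κ ρ : ℝ} (hκ : 0 < κ) (hρ : 1 ≤ ρ) :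
    ‖qf κ ρ‖ ≤ (κ + 1) / ρ ^ 2 := by
  have hρ0 : (0:ℝ) < ρ := lt_of_lt_of_le one_pos hρ
  unfold qf
  rw [norm_div, norm_mul, norm_exp_Iκρ, mul_one]
  have h1 : ‖Complex.I * κ * ρ - 1‖ ≤ (κ + 1) * ρ := by
    calc ‖Complex.I * κ * ρ - 1‖ ≤ ‖Complex.I * κ * ρ‖ + ‖(1:ℂ)‖ := norm_sub_le _ _
    _ = κ * ρ + 1 := by
        rw [norm_mul, norm_mul, Complex.norm_I, one_mul, Complex.norm_real, Complex.norm_real,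
          Real.norm_eq_abs, Real.norm_eq_abs, abs_of_pos hκ, abs_of_pos hρ0, norm_one]
    _ ≤ κ * ρ + ρ := by linarith
    _ = (κ + 1) * ρ := by ring
  have h2 : ρ ^ 3 ≤ ‖(4 * (Real.pi:ℂ) * (ρ:ℂ) ^ 3)‖ := by
    rw [norm_mul, norm_mul, norm_pow, Complex.norm_real, Complex.norm_real, Real.norm_eq_abs,
      Real.norm_eq_abs, abs_of_pos hρ0, abs_of_pos Real.pi_pos]
    have h4 : ‖(4:ℂ)‖ = 4 := by norm_num
    rw [h4]
    nlinarith [pow_pos hρ0 3, Real.pi_gt_three]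
  have h3 : (0:ℝ) < ρ ^ 3 := pow_pos hρ0 3
  calc ‖Complex.I * κ * ρ - 1‖ / ‖(4 * (Real.pi:ℂ) * (ρ:ℂ) ^ 3)‖
      ≤ ((κ + 1) * ρ) / ρ ^ 3 := by
        apply div_le_div₀ (by positivity) h1 h3 h2
    _ = (κ + 1) / ρ ^ 2 := by field_simp

lemma norm_kernel_quot {κ ρ : ℝ} (N : ℂ) (n : ℕ) {b : ℝ} (hρ0 : 0 < ρ) (hN : ‖N‖ ≤ b) :
    ‖N * Complex.exp (Complex.I * κ * ρ) / (4 * Real.pi * ρ ^ n)‖ ≤ b / ρ ^ n := by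
  rw [norm_div, norm_mul, norm_exp_Iκρ, mul_one]
  have h2 : ρ ^ n ≤ ‖(4 * (Real.pi:ℂ) * (ρ:ℂ) ^ n)‖ := by
    rw [norm_mul, norm_mul, norm_pow, Complex.norm_real, Complex.norm_real, Real.norm_eq_abs,
      Real.norm_eq_abs, abs_of_pos hρ0, abs_of_pos Real.pi_pos]
    have h4 : ‖(4:ℂ)‖ = 4 := by norm_num
    rw [h4]
    nlinarith [pow_pos hρ0 n, Real.pi_gt_three]
  exact div_le_div₀ (le_trans (norm_nonneg N) hN) hN (pow_pos hρ0 n) h2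

lemma norm_qd_le {κ ρ : ℝ} (hκ : 0 < κ) (hρ : 1 ≤ ρ) :
    ‖qd κ ρ‖ ≤ (κ ^ 2 + 3 * κ + 3) / ρ ^ 2 := by
  have hρ0 : (0:ℝ) < ρ := lt_of_lt_of_le one_pos hρ
  unfold qd
  have hN : ‖(-(κ:ℂ) ^ 2 * ρ ^ 2 - 3 * Complex.I * κ * ρ + 3)‖ ≤ (κ^2 + 3*κ + 3) * ρ ^ 2 := by
    calc ‖(-(κ:ℂ) ^ 2 * ρ ^ 2 - 3 * Complex.I * κ * ρ + 3)‖
        ≤ ‖(-(κ:ℂ) ^ 2 * ρ ^ 2 - 3 * Complex.I * κ * ρ)‖ + ‖(3:ℂ)‖ := norm_add_le _ _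
      _ ≤ ‖(-(κ:ℂ) ^ 2 * ρ ^ 2)‖ + ‖(3 * Complex.I * κ * ρ : ℂ)‖ + ‖(3:ℂ)‖ := by
          have := norm_sub_le (-(κ:ℂ) ^ 2 * ρ ^ 2) (3 * Complex.I * κ * ρ)
          linarith
      _ = κ^2 * ρ^2 + 3 * κ * ρ + 3 := by
          rw [norm_mul, norm_mul, norm_mul, norm_mul, norm_neg, norm_pow, norm_pow]
          simp only [Complex.norm_real, Complex.norm_I, Real.norm_eq_abs,
            abs_of_pos hκ, abs_of_pos hρ0]
          norm_num
      _ ≤ (κ^2 + 3*κ + 3) * ρ ^ 2 := by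
          have h1 : 1 ≤ ρ^2 := one_le_pow₀ hρ
          have h2 : ρ ≤ ρ^2 := by nlinarith
          nlinarith [mul_le_mul_of_nonneg_left h2 (by positivity : (0:ℝ) ≤ 3 * κ)]
  have := norm_kernel_quot (κ := κ) (-(κ:ℂ) ^ 2 * ρ ^ 2 - 3 * Complex.I * κ * ρ + 3) 4 hρ0 hN
  refine le_trans this ?_
  rw [div_le_div_iff₀ (by positivity) (by positivity)]
  nlinarith [sq_nonneg κ, pow_pos hρ0 2, pow_pos hρ0 4]

lemma qf_qd_cancel {κ ρ : ℝ} (hρ : ρ ≠ 0) :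
    Complex.I * κ * qf κ ρ - qd κ ρ
      = (2 * Complex.I * κ * ρ - 3) * Complex.exp (Complex.I * κ * ρ) / (4 * Real.pi * ρ ^ 4) := by
  have hπ : (Real.pi : ℂ) ≠ 0 := Complex.ofReal_ne_zero.2 Real.pi_ne_zero
  have hρ' : (ρ : ℂ) ≠ 0 := Complex.ofReal_ne_zero.2 hρ
  unfold qf qd
  field_simp
  ring_nf
  rw [Complex.I_sq]
  ring

lemma norm_qf_qd_le {κ ρ : ℝ} (hκ : 0 < κ) (hρ : 1 ≤ ρ) :
    ‖Complex.I * κ * qf κ ρ - qd κ ρ‖ ≤ (2 * κ + 3) / ρ ^ 3 := by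
  have hρ0 : (0:ℝ) < ρ := lt_of_lt_of_le one_pos hρ
  rw [qf_qd_cancel (ne_of_gt hρ0)]
  have hN : ‖(2 * Complex.I * κ * ρ - 3 : ℂ)‖ ≤ (2 * κ + 3) * ρ := by
    calc ‖(2 * Complex.I * κ * ρ - 3 : ℂ)‖ ≤ ‖(2 * Complex.I * κ * ρ : ℂ)‖ + ‖(3:ℂ)‖ :=
        norm_sub_le _ _
      _ = 2 * κ * ρ + 3 := by
          rw [norm_mul, norm_mul, norm_mul]
          simp only [Complex.norm_real, Complex.norm_I, Real.norm_eq_abs,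
            abs_of_pos hκ, abs_of_pos hρ0]
          norm_num
      _ ≤ (2 * κ + 3) * ρ := by nlinarith
  have := norm_kernel_quot (κ := κ) (2 * Complex.I * κ * ρ - 3) 4 hρ0 hN
  refine le_trans this ?_
  rw [div_le_div_iff₀ (by positivity) (by positivity)]
  nlinarith [pow_pos hρ0 3, pow_pos hρ0 4]

/-- `Av v` is the continuous linear map `v' ↦ (⟪v,v'⟫ : ℂ)`. -/
def Av (v : E3) : E3 →L[ℝ] ℂ := Complex.ofRealCLM.comp (innerSL ℝ v)

@[simp] lemma Av_apply (v v' : E3) : Av v v' = ((⟪v, v'⟫ : ℝ) : ℂ) := rfl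

lemma norm_Av_le (v : E3) : ‖Av v‖ ≤ ‖v‖ := by
  refine ContinuousLinearMap.opNorm_le_bound _ (norm_nonneg v) fun v' => ?_
  rw [Av_apply, Complex.norm_real]
  exact abs_real_inner_le_norm v v'

lemma hasFDerivAt_normSub (y : E3) {x : E3} (hxy : x - y ≠ 0) :
    HasFDerivAt (fun x' : E3 => ‖x' - y‖)
      ((‖x - y‖⁻¹ • (innerSL ℝ (x - y)))) x := by
  have h1 : HasFDerivAt (fun x' : E3 => x' - y) (ContinuousLinearMap.id ℝ E3) x :=
    (hasFDerivAt_id x).sub_const y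
  have := (hasFDerivAt_norm' hxy).comp x h1
  exact this.congr_fderiv (by simp)

/-- the kernel: `Fk κ p x y = fderiv_z (G κ x z)|_{z=y} (p)` -/
def Fk (κ : ℝ) (p x y : E3) : ℂ := -(qf κ ‖x - y‖ * ((⟪x - y, p⟫ : ℝ) : ℂ))

/-- derivative of `Fk` in `x` -/
def Fk' (κ : ℝ) (p x y : E3) : E3 →L[ℝ] ℂ :=
  (-(((⟪x - y, p⟫ : ℝ) : ℂ) * (qd κ ‖x - y‖ * (‖x - y‖ : ℝ)⁻¹))) • Av (x - y)
    + (-(qf κ ‖x - y‖)) • Av p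

lemma hasFDerivAt_Fk (κ : ℝ) (p y : E3) {x : E3} (hxy : x - y ≠ 0) :
    HasFDerivAt (fun x' => Fk κ p x' y) (Fk' κ p x y) x := by
  have hρ : ‖x - y‖ ≠ 0 := norm_ne_zero_iff.2 hxy
  -- derivative of x ↦ qf κ ‖x - y‖
  have ha : HasFDerivAt (fun x' : E3 => qf κ ‖x' - y‖)
      (((ContinuousLinearMap.smulRight (1 : ℝ →L[ℝ] ℝ) (qd κ ‖x - y‖)).comp
        ((‖x - y‖⁻¹ • (innerSL ℝ (x - y)))))) x :=
    by have := ((hasDerivAt_qf (κ := κ) hρ).hasFDerivAt).comp x (hasFDerivAt_normSub y hxy); exact this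
  -- derivative of x ↦ (⟪x - y, p⟫ : ℂ)
  have hb : HasFDerivAt (fun x' : E3 => ((⟪x' - y, p⟫ : ℝ) : ℂ)) (Av p) x := by
    have h1 : HasFDerivAt (fun x' : E3 => ⟪p, x' - y⟫) (innerSL ℝ p) x := by
      have h2 : HasFDerivAt (fun x' : E3 => x' - y) (ContinuousLinearMap.id ℝ E3) x :=
        (hasFDerivAt_id x).sub_const y
      exact ((innerSL ℝ p).hasFDerivAt (x := x - y)).comp x h2 |>.congr_fderiv (by simp)
    have h3 := Complex.ofRealCLM.hasFDerivAt.comp x h1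
    refine h3.congr_of_eventuallyEq ?_ |>.congr_fderiv rfl
    filter_upwards with z
    show ((⟪z - y, p⟫ : ℝ) : ℂ) = _
    rw [real_inner_comm]
    rfl
  have := ((ha.mul hb).neg)
  refine this.congr_fderiv ?_
  ext v
  unfold Fk'
  simp only [ContinuousLinearMap.add_apply, ContinuousLinearMap.smul_apply, Av_apply,
    ContinuousLinearMap.neg_apply, ContinuousLinearMap.coe_comp', Function.comp_apply,
    ContinuousLinearMap.coe_smul', Pi.smul_apply, innerSL_apply_apply,
    ContinuousLinearMap.smulRight_apply, ContinuousLinearMap.one_apply]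
  simp only [smul_eq_mul, Complex.real_smul]
  push_cast
  ring

set_option maxHeartbeats 1000000 in
lemma key_estimate {κ C R : ℝ} (hκ : 0 < κ) (hC : 0 ≤ C) (hR : 0 ≤ R) {p x y : E3}
    (hp : ‖p‖ ≤ C) (hy : ‖y‖ ≤ R) (hx : 2 * R + 2 ≤ ‖x‖) :
    ‖Fk' κ p x y (‖x‖⁻¹ • x) - Complex.I * κ * Fk κ p x y‖
      ≤ 4 * (C * (2*κ+3) + 4*C*R^2*(κ^2+3*κ+3) + C*(κ+1)) / ‖x‖ ^ 2 := by
  have hx0 : (0:ℝ) < ‖x‖ := by linarith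
  set xh : E3 := ‖x‖⁻¹ • x with hxhdef
  have hxh : ‖xh‖ = 1 := by
    rw [hxhdef, norm_smul, Real.norm_eq_abs, abs_of_pos (inv_pos.2 hx0)]
    field_simp
  set ρ : ℝ := ‖x - y‖ with hρdef
  have hρ_low : ‖x‖ - R ≤ ρ := le_trans (by linarith [norm_sub_norm_le x y]) le_rfl
  have hρ1 : 1 ≤ ρ := by linarith
  have hρ0 : (0:ℝ) < ρ := by linarith
  have hx2ρ : ‖x‖ ≤ 2 * ρ := by linarith
  set s : ℝ := ⟪x - y, xh⟫ with hsdef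
  have hxxh : ⟪x, xh⟫ = ‖x‖ := by
    rw [hxhdef, real_inner_smul_right, real_inner_self_eq_norm_mul_norm]
    field_simp
  have hs : s = ‖x‖ - ⟪y, xh⟫ := by rw [hsdef, inner_sub_left, hxxh]
  have hyxh : |⟪y, xh⟫| ≤ R := by
    refine le_trans (abs_real_inner_le_norm y xh) ?_
    rw [hxh, mul_one]; exact hy
  have hs0 : 0 ≤ s := by
    have := abs_le.1 hyxh
    rw [hs]; linarith
  have hsρ : s ≤ ρ := by
    refine le_trans (real_inner_le_norm _ _) ?_
    rw [hxh, mul_one]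
  set δ : ℝ := ρ - s with hδdef
  have hδ0 : 0 ≤ δ := by rw [hδdef]; linarith
  have hxs : ‖x‖ • xh = x := by
    rw [hxhdef, smul_smul]
    field_simp
    rw [one_smul]
  have hvec : (x - y) - s • xh = -(y - ⟪y, xh⟫ • xh) := by
    rw [hs, sub_smul, hxs]
    abel
  have hnormvec : ‖(x - y) - s • xh‖ ≤ 2 * R := by
    rw [hvec, norm_neg]
    refine le_trans (norm_sub_le _ _) ?_
    have : ‖⟪y, xh⟫ • xh‖ ≤ R := by
      rw [norm_smul, hxh, mul_one, Real.norm_eq_abs]; exact hyxh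
    linarith
  have hsq : ρ ^ 2 - s ^ 2 ≤ 4 * R ^ 2 := by
    have hexp : ‖(x - y) - s • xh‖ ^ 2 = ρ ^ 2 - s ^ 2 := by
      rw [norm_sub_sq_real, real_inner_smul_right, ← hsdef, norm_smul, hxh, mul_one,
        Real.norm_eq_abs, ← hρdef]
      rw [_root_.sq_abs]
      ring
    nlinarith [norm_nonneg ((x - y) - s • xh)]
  have hδle : δ ≤ 4 * R ^ 2 / ρ := by
    rw [le_div_iff₀ hρ0]
    nlinarith
  -- the three pieces
  set a : ℂ := ((⟪x - y, p⟫ : ℝ) : ℂ) with hadef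
  set A1 : ℂ := a * (Complex.I * κ * qf κ ρ - qd κ ρ) with hA1def
  set A2 : ℂ := a * qd κ ρ * ((δ : ℝ) : ℂ) * (((ρ : ℝ) : ℂ))⁻¹ with hA2def
  set A3 : ℂ := -(qf κ ρ * ((⟪p, xh⟫ : ℝ) : ℂ)) with hA3def
  have hρc : ((ρ : ℝ) : ℂ) ≠ 0 := Complex.ofReal_ne_zero.2 (ne_of_gt hρ0)
  have hexpr : Fk' κ p x y xh - Complex.I * κ * Fk κ p x y = A1 + A2 + A3 := by
    simp only [Fk', Fk, ContinuousLinearMap.add_apply, ContinuousLinearMap.smul_apply,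
      Av_apply, smul_eq_mul, ← hρdef, ← hadef, hA1def, hA2def, hA3def]
    have hscast : ((⟪x - y, xh⟫ : ℝ) : ℂ) = ((ρ : ℝ) : ℂ) - ((δ : ℝ) : ℂ) := by
      rw [← Complex.ofReal_sub]
      norm_cast
      rw [hδdef]; ring
    rw [hscast]
    simp only [Complex.ofReal_inv]
    field_simp
    ring
  rw [hexpr]
  -- bound each piece
  have hip : |⟪x - y, p⟫| ≤ ρ * C := by
    refine le_trans (abs_real_inner_le_norm _ _) ?_
    exact mul_le_mul_of_nonneg_left hp (norm_nonneg _)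
  have ha_norm : ‖a‖ ≤ ρ * C := by rw [hadef, Complex.norm_real, Real.norm_eq_abs]; exact hip
  have hbound1 : ‖A1‖ ≤ C * (2*κ+3) / ρ ^ 2 := by
    rw [hA1def, norm_mul]
    calc ‖a‖ * ‖Complex.I * κ * qf κ ρ - qd κ ρ‖
        ≤ (ρ * C) * ((2*κ+3) / ρ ^ 3) := by
          exact mul_le_mul ha_norm (norm_qf_qd_le hκ hρ1) (norm_nonneg _) (by positivity)
      _ = C * (2*κ+3) / ρ ^ 2 := by field_simp
  have hbound2 : ‖A2‖ ≤ 4*C*R^2*(κ^2+3*κ+3) / ρ ^ 2 := by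
    rw [hA2def, norm_mul, norm_mul, norm_mul]
    have h1 : ‖a‖ * ‖qd κ ρ‖ ≤ (ρ * C) * ((κ^2+3*κ+3) / ρ ^ 2) :=
      mul_le_mul ha_norm (norm_qd_le hκ hρ1) (norm_nonneg _) (by positivity)
    have h2 : ‖((δ : ℝ) : ℂ)‖ ≤ 4 * R ^ 2 / ρ := by
      rw [Complex.norm_real, Real.norm_eq_abs, _root_.abs_of_nonneg hδ0]; exact hδle
    have h3 : ‖(((ρ : ℝ) : ℂ))⁻¹‖ ≤ ρ⁻¹ := by
      rw [norm_inv, Complex.norm_real, Real.norm_eq_abs, abs_of_pos hρ0]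
    calc ‖a‖ * ‖qd κ ρ‖ * ‖((δ : ℝ) : ℂ)‖ * ‖(((ρ : ℝ) : ℂ))⁻¹‖
        ≤ ((ρ * C) * ((κ^2+3*κ+3) / ρ ^ 2)) * (4 * R ^ 2 / ρ) * ρ⁻¹ := by
          refine mul_le_mul (mul_le_mul h1 h2 (norm_nonneg _) (by positivity)) h3
            (norm_nonneg _) (by positivity)
      _ = 4*C*R^2*(κ^2+3*κ+3) / ρ ^ 3 := by field_simp
      _ ≤ 4*C*R^2*(κ^2+3*κ+3) / ρ ^ 2 := by
          have h4 : ρ ^ 2 ≤ ρ ^ 3 := by nlinarith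
          gcongr
  have hbound3 : ‖A3‖ ≤ C * (κ+1) / ρ ^ 2 := by
    rw [hA3def, norm_neg, norm_mul]
    have h2 : ‖((⟪p, xh⟫ : ℝ) : ℂ)‖ ≤ C := by
      rw [Complex.norm_real, Real.norm_eq_abs]
      refine le_trans (abs_real_inner_le_norm _ _) ?_
      rw [hxh, mul_one]; exact hp
    calc ‖qf κ ρ‖ * ‖((⟪p, xh⟫ : ℝ) : ℂ)‖ ≤ ((κ+1) / ρ ^ 2) * C :=
        mul_le_mul (norm_qf_le hκ hρ1) h2 (norm_nonneg _) (by positivity)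
      _ = C * (κ+1) / ρ ^ 2 := by ring
  have htotal : ‖A1 + A2 + A3‖ ≤ (C * (2*κ+3) + 4*C*R^2*(κ^2+3*κ+3) + C*(κ+1)) / ρ ^ 2 := by
    calc ‖A1 + A2 + A3‖ ≤ ‖A1 + A2‖ + ‖A3‖ := norm_add_le _ _
      _ ≤ ‖A1‖ + ‖A2‖ + ‖A3‖ := by linarith [norm_add_le A1 A2]
      _ ≤ C * (2*κ+3) / ρ ^ 2 + 4*C*R^2*(κ^2+3*κ+3) / ρ ^ 2 + C * (κ+1) / ρ ^ 2 := by
          linarith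
      _ = (C * (2*κ+3) + 4*C*R^2*(κ^2+3*κ+3) + C*(κ+1)) / ρ ^ 2 := by ring
  refine le_trans htotal ?_
  rw [div_le_div_iff₀ (by positivity) (by positivity)]
  have hD : 0 ≤ C * (2*κ+3) + 4*C*R^2*(κ^2+3*κ+3) + C*(κ+1) := by positivity
  have hsq2 : ‖x‖ ^ 2 ≤ 4 * ρ ^ 2 := by nlinarith
  nlinarith [mul_le_mul_of_nonneg_left hsq2 hD]

lemma hasFDerivAt_helmholtz (κ : ℝ) {x y : E3} (hxy : x - y ≠ 0) :
    HasFDerivAt (fun z => helmholtzG κ x z)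
      ((ContinuousLinearMap.smulRight (1 : ℝ →L[ℝ] ℝ) ((‖x - y‖ : ℂ) * qf κ ‖x - y‖)).comp
        ((‖x - y‖⁻¹ • (innerSL ℝ (x - y))).comp
          (-(ContinuousLinearMap.id ℝ E3)))) y := by
  have hρ : ‖x - y‖ ≠ 0 := norm_ne_zero_iff.2 hxy
  have hsub : HasFDerivAt (fun z : E3 => x - z) (-(ContinuousLinearMap.id ℝ E3)) y := by
    simpa using (hasFDerivAt_id y).const_sub x
  have hN : HasFDerivAt (fun z : E3 => ‖x - z‖)
      ((‖x - y‖⁻¹ • (innerSL ℝ (x - y))).comp (-(ContinuousLinearMap.id ℝ E3))) y :=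
    (hasFDerivAt_norm' hxy).comp y hsub
  have := ((hasDerivAt_gf κ hρ).hasFDerivAt).comp y hN
  exact this

lemma fderiv_helmholtz_apply (κ : ℝ) {x y : E3} (hxy : x - y ≠ 0) (p : E3) :
    fderiv ℝ (fun z => helmholtzG κ x z) y p = Fk κ p x y := by
  have h := hasFDerivAt_helmholtz κ hxy
  rw [h.fderiv]
  have hρ : ‖x - y‖ ≠ 0 := norm_ne_zero_iff.2 hxy
  simp only [ContinuousLinearMap.coe_comp', Function.comp_apply,
    ContinuousLinearMap.neg_apply, ContinuousLinearMap.coe_id', id_eq,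
    ContinuousLinearMap.coe_smul', Pi.smul_apply, innerSL_apply_apply,
    ContinuousLinearMap.smulRight_apply, ContinuousLinearMap.one_apply, Fk]
  rw [inner_neg_right, Complex.real_smul]
  rw [smul_eq_mul]
  push_cast
  have h1 : ((‖x - y‖ : ℝ) : ℂ) ≠ 0 := Complex.ofReal_ne_zero.2 hρ
  field_simp

lemma norm_Fk_le {κ C : ℝ} (hκ : 0 < κ) {p x y : E3} (hp : ‖p‖ ≤ C)
    (hρ : 1 ≤ ‖x - y‖) : ‖Fk κ p x y‖ ≤ C * (κ + 1) := by
  have hρ0 : (0:ℝ) < ‖x - y‖ := lt_of_lt_of_le one_pos hρ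
  have hC : 0 ≤ C := le_trans (norm_nonneg p) hp
  rw [Fk, norm_neg, norm_mul, Complex.norm_real, Real.norm_eq_abs]
  have h1 : |⟪x - y, p⟫| ≤ ‖x - y‖ * C :=
    le_trans (abs_real_inner_le_norm _ _) (mul_le_mul_of_nonneg_left hp (norm_nonneg _))
  calc ‖qf κ ‖x - y‖‖ * |⟪x - y, p⟫| ≤ ((κ + 1) / ‖x - y‖ ^ 2) * (‖x - y‖ * C) :=
      mul_le_mul (norm_qf_le hκ hρ) h1 (abs_nonneg _) (by positivity)
    _ = C * (κ + 1) / ‖x - y‖ := by field_simp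
    _ ≤ C * (κ + 1) := by
        rw [div_le_iff₀ hρ0]
        nlinarith [mul_le_mul_of_nonneg_left hρ (by positivity : (0:ℝ) ≤ C * (κ + 1))]
  
lemma norm_Fk'_le {κ C : ℝ} (hκ : 0 < κ) {p x y : E3} (hp : ‖p‖ ≤ C)
    (hρ : 1 ≤ ‖x - y‖) :
    ‖Fk' κ p x y‖ ≤ C * (κ ^ 2 + 3 * κ + 3) + C * (κ + 1) := by
  have hρ0 : (0:ℝ) < ‖x - y‖ := lt_of_lt_of_le one_pos hρ
  have hC : 0 ≤ C := le_trans (norm_nonneg p) hp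
  have h1 : |⟪x - y, p⟫| ≤ ‖x - y‖ * C :=
    le_trans (abs_real_inner_le_norm _ _) (mul_le_mul_of_nonneg_left hp (norm_nonneg _))
  rw [Fk']
  refine le_trans (norm_add_le _ _) (add_le_add ?_ ?_)
  · refine le_trans (ContinuousLinearMap.opNorm_smul_le _ _) ?_
    rw [norm_neg, norm_mul, norm_mul, Complex.norm_real, Real.norm_eq_abs,
      Complex.norm_real, Real.norm_eq_abs, abs_of_pos (inv_pos.2 hρ0)]
    calc |⟪x - y, p⟫| * (‖qd κ ‖x - y‖‖ * ‖x - y‖⁻¹) * ‖Av (x - y)‖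
        ≤ (‖x - y‖ * C) * (((κ ^ 2 + 3 * κ + 3) / ‖x - y‖ ^ 2) * ‖x - y‖⁻¹) * ‖x - y‖ := by
          refine mul_le_mul (mul_le_mul h1 ?_ (by positivity) (by positivity))
            (norm_Av_le _) (norm_nonneg _) (by positivity)
          exact mul_le_mul_of_nonneg_right (norm_qd_le hκ hρ) (by positivity)
      _ = C * (κ ^ 2 + 3 * κ + 3) / ‖x - y‖ := by field_simp
      _ ≤ C * (κ ^ 2 + 3 * κ + 3) := by
          rw [div_le_iff₀ hρ0]
          nlinarith [mul_le_mul_of_nonneg_left hρ (by positivity : (0:ℝ) ≤ C * (κ^2+3*κ+3))]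
  · refine le_trans (ContinuousLinearMap.opNorm_smul_le _ _) ?_
    rw [norm_neg]
    calc ‖qf κ ‖x - y‖‖ * ‖Av p‖ ≤ ((κ + 1) / ‖x - y‖ ^ 2) * C := by
          refine mul_le_mul (norm_qf_le hκ hρ) (le_trans (norm_Av_le p) hp)
            (norm_nonneg _) (by positivity)
      _ ≤ C * (κ + 1) := by
          rw [div_mul_eq_mul_div, div_le_iff₀ (by positivity)]
          nlinarith [mul_le_mul_of_nonneg_left (one_le_pow₀ hρ (n := 2))
            (by positivity : (0:ℝ) ≤ C * (κ + 1))]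

lemma measurable_qf (κ : ℝ) : Measurable (qf κ) := by
  unfold qf
  fun_prop

lemma measurable_qd (κ : ℝ) : Measurable (qd κ) := by
  unfold qd
  fun_prop

lemma continuous_Av : Continuous Av := by
  have : Av = fun v => ((ContinuousLinearMap.compL ℝ E3 ℝ ℂ) Complex.ofRealCLM)
      ((innerSL ℝ) v) := rfl
  rw [this]
  exact (((ContinuousLinearMap.compL ℝ E3 ℝ ℂ) Complex.ofRealCLM).continuous).comp
    (innerSL ℝ).continuous

variable {w : E3 → E3}

lemma measurable_normSub (x : E3) : Measurable fun y : E3 => ‖x - y‖ :=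
  (continuous_const.sub continuous_id).norm.measurable

lemma aesm_Fk (κ : ℝ) (x : E3) (hw : Measurable w) (μ : Measure E3) :
    AEStronglyMeasurable (fun y => Fk κ (w y) x y) μ := by
  apply Measurable.aestronglyMeasurable
  apply Measurable.neg
  exact ((measurable_qf κ).comp (measurable_normSub x)).mul
    (Complex.measurable_ofReal.comp
      ((measurable_const.sub measurable_id).inner hw))

lemma aesm_Fk' (κ : ℝ) (x : E3) (hw : Measurable w) (μ : Measure E3) :
    AEStronglyMeasurable (fun y => Fk' κ (w y) x y) μ := by
  unfold Fk'
  apply AEStronglyMeasurable.add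
  · apply AEStronglyMeasurable.fun_smul
    · apply Measurable.aestronglyMeasurable
      apply Measurable.neg
      exact (Complex.measurable_ofReal.comp
        ((measurable_const.sub measurable_id).inner hw)).mul
        (((measurable_qd κ).comp (measurable_normSub x)).mul
          (Complex.measurable_ofReal.comp ((measurable_normSub x).inv)))
    · exact (continuous_Av.comp (continuous_const.sub continuous_id)).measurable
        |>.aestronglyMeasurable
  · apply AEStronglyMeasurable.fun_smul
    · exact (Measurable.neg ((measurable_qf κ).comp (measurable_normSub x)))
        |>.aestronglyMeasurable
    · exact (continuous_Av.measurable.comp hw).aestronglyMeasurable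


set_option maxHeartbeats 1000000 in
/-- Let `κ > 0`, let `μ` be a finite positive measure supported in a compact set `K`
(`μ(Kᶜ) = 0`), and let `w : ℝ³ → ℝ³` be a bounded measurable vector field.  Then the double
layer potential `u(x) = ∫ ⟨w(y), ∇_y G(x,y)⟩ dμ(y)` — where
`⟨w(y), ∇_y G(x,y)⟩ = fderiv ℝ (G(x,·)) y (w y)` — satisfies the Sommerfeld radiation
condition: with `r = ‖x‖`, `r·(∂u/∂r − iκu) → 0` as `‖x‖ → ∞`. -/
theorem doubleLayerPotential_sommerfeld (κ : ℝ) (hκ : 0 < κ)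
    (μ : Measure (EuclideanSpace ℝ (Fin 3))) [IsFiniteMeasure μ]
    (K : Set (EuclideanSpace ℝ (Fin 3))) (hK : IsCompact K) (hsupp : μ Kᶜ = 0)
    (w : EuclideanSpace ℝ (Fin 3) → EuclideanSpace ℝ (Fin 3))
    (hw_meas : Measurable w) (hw_bdd : ∃ C : ℝ, ∀ y, ‖w y‖ ≤ C)
    (u : EuclideanSpace ℝ (Fin 3) → ℂ)
    (hu : ∀ x, u x = ∫ y, fderiv ℝ (fun z => helmholtzG κ x z) y (w y) ∂μ) :
    Filter.Tendsto
      (fun x : EuclideanSpace ℝ (Fin 3) =>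
        (‖x‖ : ℂ) * (fderiv ℝ u x (‖x‖⁻¹ • x) - Complex.I * (κ : ℂ) * u x))
      (Filter.comap (fun x : EuclideanSpace ℝ (Fin 3) => ‖x‖) Filter.atTop) (nhds 0) := by
  obtain ⟨C, hC⟩ := hw_bdd
  have hC0 : 0 ≤ C := le_trans (norm_nonneg _) (hC 0)
  obtain ⟨r, hr⟩ := hK.isBounded.subset_closedBall 0
  set R : ℝ := max r 0 with hRdef
  have hR0 : 0 ≤ R := le_max_right r 0
  have hKR : K ⊆ Metric.closedBall 0 R :=
    hr.trans (Metric.closedBall_subset_closedBall (le_max_left r 0))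
  set D : ℝ := 4 * (C * (2*κ+3) + 4*C*R^2*(κ^2+3*κ+3) + C*(κ+1)) with hDdef
  have hD0 : 0 ≤ D := by rw [hDdef]; positivity
  set M : ℝ := (μ Set.univ).toReal with hMdef
  have hM0 : 0 ≤ M := ENNReal.toReal_nonneg
  have haeK : ∀ᵐ y ∂μ, ‖y‖ ≤ R := by
    have h1 : ∀ᵐ y ∂μ, y ∈ K := by
      rw [MeasureTheory.ae_iff]
      exact hsupp
    filter_upwards [h1] with y hy
    have := hKR hy
    rwa [Metric.mem_closedBall, dist_zero_right] at this
  -- Main pointwise bound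
  have hmain : ∀ x : E3, 2*R+3 ≤ ‖x‖ →
      ‖(‖x‖ : ℂ) * (fderiv ℝ u x (‖x‖⁻¹ • x) - Complex.I * (κ : ℂ) * u x)‖
        ≤ D * M / ‖x‖ := by
    intro x hx
    have hx0 : (0:ℝ) < ‖x‖ := by linarith
    -- distances from points near x to points in K
    have hdist : ∀ x' : E3, 2*R+2 ≤ ‖x'‖ → ∀ y : E3, ‖y‖ ≤ R →
        1 ≤ ‖x' - y‖ := by
      intro x' hx' y hy
      have := norm_sub_norm_le x' y
      linarith
    have hne : ∀ x' : E3, 2*R+2 ≤ ‖x'‖ → ∀ y : E3, ‖y‖ ≤ R → x' - y ≠ 0 := by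
      intro x' hx' y hy h0
      have h1 := hdist x' hx' y hy
      rw [h0, norm_zero] at h1
      linarith
    have hballnorm : ∀ x' ∈ Metric.ball x 1, 2*R+2 ≤ ‖x'‖ := by
      intro x' hx'
      rw [Metric.mem_ball, dist_eq_norm] at hx'
      have h3 := norm_sub_norm_le x x'
      have h4 : ‖x - x'‖ = ‖x' - x‖ := norm_sub_rev x x'
      linarith
    -- representation of u near x
    have hurep : ∀ x' : E3, 2*R+2 ≤ ‖x'‖ → u x' = ∫ y, Fk κ (w y) x' y ∂μ := by
      intro x' hx'
      rw [hu x']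
      apply integral_congr_ae
      filter_upwards [haeK] with y hy
      exact fderiv_helmholtz_apply κ (hne x' hx' y hy) (w y)
    have hueq : u =ᶠ[nhds x] fun x' => ∫ y, Fk κ (w y) x' y ∂μ := by
      filter_upwards [Metric.ball_mem_nhds x one_pos] with x' hx'
      exact hurep x' (hballnorm x' hx')
    -- differentiation under the integral
    have hder : HasFDerivAt (fun x' => ∫ y, Fk κ (w y) x' y ∂μ)
        (∫ y, Fk' κ (w y) x y ∂μ) x := by
      apply hasFDerivAt_integral_of_dominated_of_fderiv_le
        (F := fun x' y => Fk κ (w y) x' y) (F' := fun x' y => Fk' κ (w y) x' y)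
        (bound := fun _ => C * (κ ^ 2 + 3 * κ + 3) + C * (κ + 1)) (Metric.ball_mem_nhds x one_pos)
      · filter_upwards with x' using aesm_Fk κ x' hw_meas μ
      · refine (integrable_const (C * (κ+1))).mono' (aesm_Fk κ x hw_meas μ) ?_
        filter_upwards [haeK] with y hy
        exact norm_Fk_le hκ (hC y) (hdist x (by linarith) y hy)
      · exact aesm_Fk' κ x hw_meas μ
      · filter_upwards [haeK] with y hy x' hx'
        exact norm_Fk'_le hκ (hC y) (hdist x' (hballnorm x' hx') y hy)
      · exact integrable_const _
      · filter_upwards [haeK] with y hy x' hx'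
        exact hasFDerivAt_Fk κ (w y) y (hne x' (hballnorm x' hx') y hy)
    have hfd : fderiv ℝ u x = ∫ y, Fk' κ (w y) x y ∂μ :=
      (hder.congr_of_eventuallyEq hueq).fderiv
    have hint' : Integrable (fun y => Fk' κ (w y) x y) μ := by
      refine (integrable_const (C * (κ ^ 2 + 3 * κ + 3) + C * (κ + 1))).mono'
        (aesm_Fk' κ x hw_meas μ) ?_
      filter_upwards [haeK] with y hy
      exact norm_Fk'_le hκ (hC y) (hdist x (by linarith) y hy)
    have hintFk : Integrable (fun y => Fk κ (w y) x y) μ := by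
      refine (integrable_const (C * (κ+1))).mono' (aesm_Fk κ x hw_meas μ) ?_
      filter_upwards [haeK] with y hy
      exact norm_Fk_le hκ (hC y) (hdist x (by linarith) y hy)
    have happ : (∫ y, Fk' κ (w y) x y ∂μ) (‖x‖⁻¹ • x)
        = ∫ y, Fk' κ (w y) x y (‖x‖⁻¹ • x) ∂μ :=
      ContinuousLinearMap.integral_apply hint' _
    have hintapp : Integrable (fun y => Fk' κ (w y) x y (‖x‖⁻¹ • x)) μ :=
      (ContinuousLinearMap.apply ℝ ℂ (‖x‖⁻¹ • x)).integrable_comp hint'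
    have hsub : fderiv ℝ u x (‖x‖⁻¹ • x) - Complex.I * (κ : ℂ) * u x
        = ∫ y, (Fk' κ (w y) x y (‖x‖⁻¹ • x) - Complex.I * κ * Fk κ (w y) x y) ∂μ := by
      rw [hfd, happ, hurep x (by linarith), ← integral_const_mul]
      exact (integral_sub hintapp (hintFk.const_mul _)).symm
    rw [hsub]
    have hbnd : ‖∫ y, (Fk' κ (w y) x y (‖x‖⁻¹ • x) - Complex.I * κ * Fk κ (w y) x y) ∂μ‖
        ≤ (D / ‖x‖ ^ 2) * M := by
      apply norm_integral_le_of_norm_le_const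
      filter_upwards [haeK] with y hy
      have := key_estimate hκ hC0 hR0 (hC y) hy (by linarith : 2 * R + 2 ≤ ‖x‖)
      rw [hDdef]
      exact this
    rw [norm_mul, Complex.norm_real, Real.norm_eq_abs, abs_of_pos hx0]
    calc ‖x‖ * ‖∫ y, (Fk' κ (w y) x y (‖x‖⁻¹ • x) - Complex.I * κ * Fk κ (w y) x y) ∂μ‖
        ≤ ‖x‖ * ((D / ‖x‖ ^ 2) * M) := mul_le_mul_of_nonneg_left hbnd (le_of_lt hx0)
      _ = D * M / ‖x‖ := by field_simp
  -- conclude by squeezing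
  apply squeeze_zero_norm' (a := fun x : E3 => D * M / ‖x‖)
  · have hev : ∀ᶠ x : E3 in Filter.comap (fun x : E3 => ‖x‖) Filter.atTop, 2*R+3 ≤ ‖x‖ :=
      Filter.tendsto_comap.eventually (Filter.eventually_ge_atTop (2*R+3))
    filter_upwards [hev] with x hx
    exact hmain x hx
  · have h1 : Filter.Tendsto (fun x : E3 => ‖x‖)
        (Filter.comap (fun x : E3 => ‖x‖) Filter.atTop) Filter.atTop :=
      Filter.tendsto_comap
    simpa using Filter.Tendsto.div_atTop (tendsto_const_nhds (x := D * M)) h1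
end
end
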